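/- arXiv:math/0107064 — 10 statements merged into one kernel-verified Lean document; each statement's English description precedes it below -/
import Mathlib

section
/- Let N ⊆ M ⊆ R be a tower of unital k-algebras (k a field). Suppose E : M → N is an N-bimodule map with dual bases x₁,…,xₙ, y₁,…,yₙ ∈ M (i.e., ∑ᵢ E(m xᵢ)yᵢ = m = ∑ᵢ xᵢ E(yᵢ m) for all m ∈ M), and F : R → M is an M-bimodule map with dual bases z₁,…,z_p, w₁,…,w_p ∈ R (i.e., ∑ⱼ F(r zⱼ)wⱼ = r = ∑ⱼ zⱼ F(wⱼ r) for all r ∈ R). Then the composite E ∘ F : R → N is an N-bimodule map with dual bases {zⱼxᵢ}, {yᵢwⱼ}: for all r ∈ R, ∑ᵢ,ⱼ E(F(r zⱼ xᵢ)) yᵢ wⱼ = r = ∑ᵢ,ⱼ zⱼ xᵢ E(F(yᵢ wⱼ r)). -/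
/-- **Transitivity of Frobenius extensions.** If `E : M → N` is a Frobenius homomorphism
with dual bases `{xᵢ}, {yᵢ}` and `F : R → M` is a Frobenius homomorphism with dual bases
`{zⱼ}, {wⱼ}`, then `E ∘ F : R → N` is a Frobenius homomorphism with dual bases
`{zⱼxᵢ}, {yᵢwⱼ}`. Here `N ⊆ M ⊆ R` is a tower of unital `k`-algebras, realized as
subalgebras `N ≤ M` of the ambient algebra `R`. -/
theorem frobenius_transitivity
    (k : Type*) [Field k] (R : Type*) [Ring R] [Algebra k R]
    (N M : Subalgebra k R) (hNM : N ≤ M)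
    (E F : R →ₗ[k] R)
    (hE_mem : ∀ m ∈ M, E m ∈ N)
    (hE_bimod : ∀ n ∈ N, ∀ n' ∈ N, ∀ m ∈ M, E (n * m * n') = n * E m * n')
    (n p : ℕ) (x y : Fin n → R) (z w : Fin p → R)
    (hx : ∀ i, x i ∈ M) (hy : ∀ i, y i ∈ M)
    (hE₁ : ∀ m ∈ M, ∑ i, E (m * x i) * y i = m)
    (hE₂ : ∀ m ∈ M, ∑ i, x i * E (y i * m) = m)
    (hF_mem : ∀ r : R, F r ∈ M)
    (hF_bimod : ∀ m ∈ M, ∀ m' ∈ M, ∀ r : R, F (m * r * m') = m * F r * m')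
    (hF₁ : ∀ r : R, ∑ j, F (r * z j) * w j = r)
    (hF₂ : ∀ r : R, ∑ j, z j * F (w j * r) = r) :
    (∀ n₁ ∈ N, ∀ n₂ ∈ N, ∀ r : R, E (F (n₁ * r * n₂)) = n₁ * E (F r) * n₂) ∧
    (∀ r : R, ∑ j, ∑ i, E (F (r * (z j * x i))) * (y i * w j) = r) ∧
    (∀ r : R, ∑ j, ∑ i, (z j * x i) * E (F ((y i * w j) * r)) = r) := by
  refine ⟨?_, ?_, ?_⟩
  · intro n₁ hn₁ n₂ hn₂ r
    rw [hF_bimod n₁ (hNM hn₁) n₂ (hNM hn₂) r,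
        hE_bimod n₁ hn₁ n₂ hn₂ (F r) (hF_mem r)]
  · intro r
    have key : ∀ j, ∑ i, E (F (r * (z j * x i))) * (y i * w j) = F (r * z j) * w j := by
      intro j
      simp_rw [← mul_assoc]
      rw [← Finset.sum_mul]
      congr 1
      calc ∑ i, E (F (r * z j * x i)) * y i
          = ∑ i, E (F (r * z j) * x i) * y i := by
            refine Finset.sum_congr rfl fun i _ => ?_
            have := hF_bimod 1 M.one_mem (x i) (hx i) (r * z j)
            rw [one_mul, one_mul] at this
            rw [this]
        _ = F (r * z j) := hE₁ _ (hF_mem _)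
    simp_rw [key]
    exact hF₁ r
  · intro r
    have key : ∀ j, ∑ i, (z j * x i) * E (F ((y i * w j) * r)) = z j * F (w j * r) := by
      intro j
      have : ∑ i, x i * E (F ((y i * w j) * r)) = F (w j * r) := by
        calc ∑ i, x i * E (F ((y i * w j) * r))
            = ∑ i, x i * E (y i * F (w j * r)) := by
              refine Finset.sum_congr rfl fun i _ => ?_
              have := hF_bimod (y i) (hy i) 1 M.one_mem (w j * r)
              rw [mul_one, mul_one] at this
              rw [mul_assoc, this]
          _ = F (w j * r) := hE₂ _ (hF_mem _)
      calc ∑ i, (z j * x i) * E (F ((y i * w j) * r))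
          = z j * ∑ i, x i * E (F ((y i * w j) * r)) := by
            rw [Finset.mul_sum]; simp_rw [mul_assoc]
        _ = z j * F (w j * r) := by rw [this]
    simp_rw [key]
    exact hF₂ r
end

section
/- Let N ⊆ M be unital k-algebras (k a field) and let E : M → N be an N-bimodule map with dual bases x₁,…,xₙ, y₁,…,yₙ ∈ M (∑ᵢ E(m xᵢ)yᵢ = m = ∑ᵢ xᵢ E(yᵢ m) for all m ∈ M). Then there exists a unique map q : C_M(N) → C_M(N) on the centralizer C_M(N) = {c ∈ M : cn = nc for all n ∈ N} satisfying E(q(c)m) = E(mc) for all m ∈ M and c ∈ C_M(N); moreover q is a k-algebra automorphism of C_M(N) (the Nakayama automorphism of E). -/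
/-- **Existence and uniqueness of the Nakayama automorphism.** If `E : M → N` is a
Frobenius homomorphism (an `N`-bimodule map with dual bases `{xᵢ}, {yᵢ}`), then there
is a unique map `q` on the centralizer `C_M(N)` with `E(q(c)·m) = E(m·c)` for all
`m ∈ M`, `c ∈ C_M(N)`; moreover any such map is (induced by) a `k`-algebra
automorphism of `C_M(N)`. -/
theorem nakayama_automorphism
    (k : Type*) [Field k] (M : Type*) [Ring M] [Algebra k M]
    (N : Subalgebra k M)
    (E : M →ₗ[k] M)
    (hE_mem : ∀ m : M, E m ∈ N)
    (hE_bimod : ∀ n ∈ N, ∀ n' ∈ N, ∀ m : M, E (n * m * n') = n * E m * n')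
    (n : ℕ) (x y : Fin n → M)
    (hE₁ : ∀ m : M, ∑ i, E (m * x i) * y i = m)
    (hE₂ : ∀ m : M, ∑ i, x i * E (y i * m) = m) :
    (∃! q : ↥(Subalgebra.centralizer k (N : Set M)) → ↥(Subalgebra.centralizer k (N : Set M)),
      ∀ c : ↥(Subalgebra.centralizer k (N : Set M)), ∀ m : M,
        E ((q c : M) * m) = E (m * (c : M))) ∧
    (∀ q : ↥(Subalgebra.centralizer k (N : Set M)) → ↥(Subalgebra.centralizer k (N : Set M)),
      (∀ c : ↥(Subalgebra.centralizer k (N : Set M)), ∀ m : M,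
        E ((q c : M) * m) = E (m * (c : M))) →
      ∃ q' : ↥(Subalgebra.centralizer k (N : Set M)) ≃ₐ[k]
          ↥(Subalgebra.centralizer k (N : Set M)),
        ∀ c, q' c = q c) := by
  classical
  -- one-sided bimodule properties
  have hEl : ∀ g ∈ N, ∀ m : M, E (g * m) = g * E m := by
    intro g hg m
    simpa using hE_bimod g hg 1 N.one_mem m
  have hEr : ∀ g ∈ N, ∀ m : M, E (m * g) = E m * g := by
    intro g hg m
    simpa using hE_bimod 1 N.one_mem g hg m
  -- nondegeneracy of E
  have ndL : ∀ a b : M, (∀ m, E (a * m) = E (b * m)) → a = b := by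
    intro a b h
    calc a = ∑ i, E (a * x i) * y i := (hE₁ a).symm
    _ = ∑ i, E (b * x i) * y i := by simp only [h]
    _ = b := hE₁ b
  have ndR : ∀ a b : M, (∀ m, E (m * a) = E (m * b)) → a = b := by
    intro a b h
    calc a = ∑ i, x i * E (y i * a) := (hE₂ a).symm
    _ = ∑ i, x i * E (y i * b) := by simp only [h]
    _ = b := hE₂ b
  set qf : M → M := fun c => ∑ i, E (x i * c) * y i with hqf
  set pf : M → M := fun c => ∑ i, x i * E (c * y i) with hpf
  have hcomm : ∀ c ∈ Subalgebra.centralizer k (N : Set M), ∀ g ∈ N, g * c = c * g := by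
    intro c hc g hg
    exact (Subalgebra.mem_centralizer_iff k).mp hc g hg
  -- the defining property of qf
  have hq : ∀ c ∈ Subalgebra.centralizer k (N : Set M), ∀ m : M,
      E (qf c * m) = E (m * c) := by
    intro c hc m
    have h1 : E (qf c * m) = ∑ i, E (x i * c) * E (y i * m) := by
      rw [hqf]
      simp only [Finset.sum_mul, map_sum]
      refine Finset.sum_congr rfl fun i _ => ?_
      rw [mul_assoc, hEl _ (hE_mem _)]
    have h2 : E (m * c) = ∑ i, E (x i * c) * E (y i * m) := by
      conv_lhs => rw [← hE₂ m]
      rw [Finset.sum_mul, map_sum]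
      refine Finset.sum_congr rfl fun i _ => ?_
      rw [mul_assoc, hcomm c hc _ (hE_mem _), ← mul_assoc, hEr _ (hE_mem _)]
    rw [h1, h2]
  -- the defining property of pf
  have hp : ∀ c ∈ Subalgebra.centralizer k (N : Set M), ∀ m : M,
      E (m * pf c) = E (c * m) := by
    intro c hc m
    have h1 : E (m * pf c) = ∑ i, E (m * x i) * E (c * y i) := by
      rw [hpf]
      simp only [Finset.mul_sum, map_sum]
      refine Finset.sum_congr rfl fun i _ => ?_
      rw [← mul_assoc]; exact hEr _ (hE_mem _) _
    have h2 : E (c * m) = ∑ i, E (m * x i) * E (c * y i) := by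
      conv_lhs => rw [← hE₁ m]
      rw [Finset.mul_sum, map_sum]
      refine Finset.sum_congr rfl fun i _ => ?_
      rw [← mul_assoc, ← hcomm c hc _ (hE_mem _), mul_assoc, hEl _ (hE_mem _)]
    rw [h1, h2]
  -- qf preserves the centralizer
  have hqmem : ∀ c ∈ Subalgebra.centralizer k (N : Set M),
      qf c ∈ Subalgebra.centralizer k (N : Set M) := by
    intro c hc
    rw [Subalgebra.mem_centralizer_iff]
    intro g hg
    refine ndL _ _ fun m => ?_
    calc E (g * qf c * m) = g * E (qf c * m) := by rw [mul_assoc, hEl g hg]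
    _ = g * E (m * c) := by rw [hq c hc]
    _ = E (g * (m * c)) := (hEl g hg _).symm
    _ = E ((g * m) * c) := by rw [mul_assoc]
    _ = E (qf c * (g * m)) := (hq c hc _).symm
    _ = E (qf c * g * m) := by rw [mul_assoc]
  -- pf preserves the centralizer
  have hpmem : ∀ c ∈ Subalgebra.centralizer k (N : Set M),
      pf c ∈ Subalgebra.centralizer k (N : Set M) := by
    intro c hc
    rw [Subalgebra.mem_centralizer_iff]
    intro g hg
    refine ndR _ _ fun m => ?_
    calc E (m * (g * pf c)) = E ((m * g) * pf c) := by rw [mul_assoc]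
    _ = E (c * (m * g)) := hp c hc _
    _ = E (c * m) * g := by rw [← mul_assoc, hEr g hg]
    _ = E (m * pf c) * g := by rw [hp c hc]
    _ = E (m * pf c * g) := (hEr g hg _).symm
    _ = E (m * (pf c * g)) := by rw [mul_assoc]
  -- the canonical q on the centralizer
  set q0 : ↥(Subalgebra.centralizer k (N : Set M)) → ↥(Subalgebra.centralizer k (N : Set M)) :=
    fun c => ⟨qf (c : M), hqmem _ c.2⟩ with hq0
  have hq0prop : ∀ c : ↥(Subalgebra.centralizer k (N : Set M)), ∀ m : M,
      E ((q0 c : M) * m) = E (m * (c : M)) := fun c m => hq _ c.2 m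
  have huniq : ∀ q' : ↥(Subalgebra.centralizer k (N : Set M)) →
        ↥(Subalgebra.centralizer k (N : Set M)),
      (∀ c : ↥(Subalgebra.centralizer k (N : Set M)), ∀ m : M,
        E ((q' c : M) * m) = E (m * (c : M))) → q' = q0 := by
    intro q' hq'
    funext c
    refine Subtype.ext (ndL _ _ fun m => ?_)
    rw [hq' c m, hq0prop c m]
  constructor
  · exact ⟨q0, hq0prop, huniq⟩
  · intro q hqq
    have hqeq : q = q0 := huniq q hqq
    refine ⟨{ toFun := q0
              invFun := fun c => ⟨pf (c : M), hpmem _ c.2⟩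
              left_inv := ?_
              right_inv := ?_
              map_mul' := ?_
              map_add' := ?_
              commutes' := ?_ }, ?_⟩
    · -- left inverse
      intro c
      refine Subtype.ext (ndR _ _ fun m => ?_)
      calc E (m * pf (qf (c : M))) = E (qf (c : M) * m) := hp _ (hqmem _ c.2) m
      _ = E (m * (c : M)) := hq _ c.2 m
    · -- right inverse
      intro c
      refine Subtype.ext (ndL _ _ fun m => ?_)
      calc E (qf (pf (c : M)) * m) = E (m * pf (c : M)) := hq _ (hpmem _ c.2) m
      _ = E ((c : M) * m) := hp _ c.2 m
    · -- multiplicative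
      intro a b
      refine Subtype.ext (ndL _ _ fun m => ?_)
      have hab : ((a * b : ↥(Subalgebra.centralizer k (N : Set M))) : M)
          = (a : M) * (b : M) := rfl
      show E (qf ((a * b : ↥(Subalgebra.centralizer k (N : Set M))) : M) * m)
        = E ((qf (a : M) * qf (b : M)) * m)
      rw [hab]
      calc E (qf ((a : M) * (b : M)) * m) = E (m * ((a : M) * (b : M))) := hq _ (a * b).2 m
      _ = E ((m * (a : M)) * (b : M)) := by rw [mul_assoc]
      _ = E (qf (b : M) * (m * (a : M))) := (hq _ b.2 _).symm
      _ = E ((qf (b : M) * m) * (a : M)) := by rw [mul_assoc]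
      _ = E (qf (a : M) * (qf (b : M) * m)) := (hq _ a.2 _).symm
      _ = E ((qf (a : M) * qf (b : M)) * m) := by rw [mul_assoc]
    · -- additive
      intro a b
      refine Subtype.ext ?_
      show qf ((a : M) + (b : M)) = qf (a : M) + qf (b : M)
      simp [hqf, mul_add, add_mul, Finset.sum_add_distrib]
    · -- commutes with scalars
      intro r
      refine Subtype.ext (ndL _ _ fun m => ?_)
      show E (qf ((algebraMap k ↥(Subalgebra.centralizer k (N : Set M)) r : _) : M) * m)
        = E (((algebraMap k ↥(Subalgebra.centralizer k (N : Set M)) r : _) : M) * m)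
      have halg : ((algebraMap k ↥(Subalgebra.centralizer k (N : Set M)) r : _) : M)
          = algebraMap k M r := rfl
      rw [halg]
      calc E (qf (algebraMap k M r) * m)
          = E (m * algebraMap k M r) := hq _ (Subalgebra.algebraMap_mem _ r) m
      _ = E (algebraMap k M r * m) := by rw [← Algebra.commutes r m]
    · intro c
      rw [hqeq]
      rfl
end

section
/- (Braid-like relations, concrete form.) Let k be a field, N ⊆ M unital k-algebras, E : M → N an N-bimodule map with E(1) = 1 and dual bases x₁,…,xₙ, y₁,…,yₙ ∈ M, and ∑ᵢ xᵢyᵢ = λ⁻¹·1 for nonzero λ ∈ k. Let M₁ := End(M_N) with the right M-module structure f · m := f ∘ ℓ_m, let M₂ be the k-algebra of right M-module endomorphisms of M₁, let L : M₁ → M₂ be given by left composition L_w(f) = w ∘ f, put e₁ := E ∈ M₁ and define e₂ ∈ M₂ by e₂(f) := ℓ_{Φ(f)}, where Φ(f) := λ ∑ᵢ f(xᵢ)yᵢ. Then e₂ is a well-defined right M-module endomorphism of M₁, e₂ ∘ e₂ = e₂, and the braid-like relations hold in M₂: L_{e₁} ∘ e₂ ∘ L_{e₁} = λ · L_{e₁}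 and e₂ ∘ L_{e₁} ∘ e₂ = λ · e₂. -/
/-- **Braid-like relations, concrete form.** With `M₁ = End(M_N)` (modeled as the
right-`N`-linear `k`-endomorphisms of `M`), `e₁ := E`, `Φ(f) := λ ∑ᵢ f(xᵢ)yᵢ` and
`e₂(f) := ℓ_{Φ(f)}`, the map `e₂` preserves right-`N`-linearity, is right
`M`-linear (for the action `f · m = f ∘ ℓ_m`), is idempotent on `M₁`, and satisfies
the braid-like relations `L_{e₁} ∘ e₂ ∘ L_{e₁} = λ·L_{e₁}` and
`e₂ ∘ L_{e₁} ∘ e₂ = λ·e₂` on `M₁`, where `L_{e₁}(f) = E ∘ f`. -/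
theorem braid_like_relations
    (k : Type*) [Field k] (M : Type*) [Ring M] [Algebra k M]
    (N : Subalgebra k M)
    (E : M →ₗ[k] M)
    (hE_mem : ∀ m : M, E m ∈ N)
    (hE_bimod : ∀ n ∈ N, ∀ n' ∈ N, ∀ m : M, E (n * m * n') = n * E m * n')
    (hE_one : E 1 = 1)
    (n : ℕ) (x y : Fin n → M)
    (hE₁ : ∀ m : M, ∑ i, E (m * x i) * y i = m)
    (hE₂ : ∀ m : M, ∑ i, x i * E (y i * m) = m)
    (lam : k) (hlam : lam ≠ 0)
    (hindex : ∑ i, x i * y i = lam⁻¹ • (1 : M))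
    (Φ : (M →ₗ[k] M) → M) (hΦ : ∀ f, Φ f = lam • ∑ i, f (x i) * y i)
    (e₂ : (M →ₗ[k] M) → (M →ₗ[k] M)) (he₂ : ∀ f, e₂ f = LinearMap.mulLeft k (Φ f)) :
    (∀ f : M →ₗ[k] M, (∀ a : M, ∀ n' ∈ N, f (a * n') = f a * n') →
      ∀ a : M, ∀ n' ∈ N, (e₂ f) (a * n') = (e₂ f) a * n') ∧
    (∀ f : M →ₗ[k] M, (∀ a : M, ∀ n' ∈ N, f (a * n') = f a * n') →
      ∀ m : M, e₂ (f ∘ₗ LinearMap.mulLeft k m) = e₂ f ∘ₗ LinearMap.mulLeft k m) ∧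
    (∀ f : M →ₗ[k] M, (∀ a : M, ∀ n' ∈ N, f (a * n') = f a * n') →
      e₂ (e₂ f) = e₂ f) ∧
    (∀ f : M →ₗ[k] M, (∀ a : M, ∀ n' ∈ N, f (a * n') = f a * n') →
      E ∘ₗ e₂ (E ∘ₗ f) = lam • (E ∘ₗ f)) ∧
    (∀ f : M →ₗ[k] M, (∀ a : M, ∀ n' ∈ N, f (a * n') = f a * n') →
      e₂ (E ∘ₗ e₂ f) = lam • e₂ f) := by
  -- left/right N-linearity of E
  have hEl : ∀ n₀ ∈ N, ∀ m : M, E (n₀ * m) = n₀ * E m := by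
    intro n₀ hn m
    have := hE_bimod n₀ hn 1 N.one_mem m
    simpa using this
  have hEr : ∀ m : M, ∀ n' ∈ N, E (m * n') = E m * n' := by
    intro m n' hn
    have := hE_bimod 1 N.one_mem n' hn m
    simpa using this
  -- Φ of a left multiplication is the multiplier itself
  have hΦmul : ∀ w : M, Φ (LinearMap.mulLeft k w) = w := by
    intro w
    rw [hΦ]
    simp only [LinearMap.mulLeft_apply]
    have h1 : ∑ i, w * x i * y i = w * ∑ i, x i * y i := by
      rw [Finset.mul_sum]; exact Finset.sum_congr rfl fun i _ => (mul_assoc _ _ _)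
    rw [h1, hindex, mul_smul_comm, mul_one, smul_smul, mul_inv_cancel₀ hlam, one_smul]
  -- Φ of the composite with ℓ_m
  have hΦcomp : ∀ f : M →ₗ[k] M, (∀ a : M, ∀ n' ∈ N, f (a * n') = f a * n') →
      ∀ m : M, Φ (f ∘ₗ LinearMap.mulLeft k m) = Φ f * m := by
    intro f hf m
    rw [hΦ, hΦ]
    simp only [LinearMap.comp_apply, LinearMap.mulLeft_apply]
    have h1 : ∀ i, f (m * x i) = ∑ j, f (x j) * E (y j * (m * x i)) := by
      intro i
      conv_lhs => rw [← hE₂ (m * x i)]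
      rw [map_sum]
      exact Finset.sum_congr rfl fun j _ => hf _ _ (hE_mem _)
    calc lam • ∑ i, f (m * x i) * y i
        = lam • ∑ i, ∑ j, f (x j) * E (y j * (m * x i)) * y i := by
          congr 1
          exact Finset.sum_congr rfl fun i _ => by rw [h1 i, Finset.sum_mul]
      _ = lam • ∑ j, f (x j) * ∑ i, E (y j * m * x i) * y i := by
          rw [Finset.sum_comm]
          congr 1
          refine Finset.sum_congr rfl fun j _ => ?_
          rw [Finset.mul_sum]
          exact Finset.sum_congr rfl fun i _ => by rw [mul_assoc, ← mul_assoc (y j)]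
      _ = lam • ∑ j, f (x j) * (y j * m) := by
          congr 1; exact Finset.sum_congr rfl fun j _ => by rw [hE₁ (y j * m)]
      _ = (lam • ∑ j, f (x j) * y j) * m := by
          rw [smul_mul_assoc, Finset.sum_mul]
          congr 1; exact Finset.sum_congr rfl fun j _ => (mul_assoc _ _ _).symm
  refine ⟨?_, ?_, ?_, ?_, ?_⟩
  · intro f _ a n' hn'
    rw [he₂]
    simp only [LinearMap.mulLeft_apply, mul_assoc]
  · intro f hf m
    rw [he₂, he₂, hΦcomp f hf m]
    ext a
    simp [mul_assoc]
  · intro f _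
    rw [he₂ f, he₂, hΦmul]
  · intro f hf
    ext a
    simp only [LinearMap.comp_apply, LinearMap.smul_apply, he₂, LinearMap.mulLeft_apply, hΦ]
    rw [smul_mul_assoc, map_smul, Finset.sum_mul, map_sum]
    congr 1
    have h1 : f a = ∑ i, f (x i) * E (y i * a) := by
      conv_lhs => rw [← hE₂ a, map_sum]
      exact Finset.sum_congr rfl fun i _ => hf _ _ (hE_mem _)
    rw [h1, map_sum]
    refine Finset.sum_congr rfl fun i _ => ?_
    rw [mul_assoc, hEl _ (hE_mem _) (y i * a), hEr _ _ (hE_mem _)]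
  · intro f _
    rw [he₂ f, he₂]
    have h2 : Φ (E ∘ₗ LinearMap.mulLeft k (Φ f)) = lam • Φ f := by
      rw [hΦ]
      simp only [LinearMap.comp_apply, LinearMap.mulLeft_apply]
      rw [hE₁ (Φ f)]
    rw [h2]
    ext a
    simp [smul_mul_assoc]
end

section
/- Let k be a field, N ⊆ M ⊆ M₁ unital k-algebras, and E_M : M₁ → M an M-bimodule map admitting dual bases (there exist p₁,…,p_t, q₁,…,q_t ∈ M₁ with ∑ⱼ E_M(x pⱼ)qⱼ = x = ∑ⱼ pⱼ E_M(qⱼ x) for all x ∈ M₁). If M₁ is free as a right M-module on a basis z₁,…,z_r contained in the centralizer C_{M₁}(N), then there exist w₁,…,w_r ∈ C_{M₁}(N) such that E_M(wᵢ zⱼ) = δᵢⱼ·1 for all i, j, and {zᵢ}, {wᵢ} are dual bases for E_M: ∑ᵢ E_M(x zᵢ)wᵢ = x = ∑ᵢ zᵢ E_M(wᵢ x) for all x ∈ M₁. -/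
/-- If `E_M : M₁ → M` is a Frobenius homomorphism and `M₁` is free as a right
`M`-module on a basis `z₁, …, z_r` contained in the centralizer `C_{M₁}(N)`, then
there exist `w₁, …, w_r ∈ C_{M₁}(N)` with `E_M(wᵢ zⱼ) = δᵢⱼ·1`, such that
`{zᵢ}, {wᵢ}` are (orthogonal) dual bases for `E_M`. The tower `N ⊆ M ⊆ M₁` is
realized by subalgebras `N ≤ M` of the ambient algebra `M₁`. -/
theorem orthogonal_dual_bases_in_centralizer
    (k : Type*) [Field k] (M₁ : Type*) [Ring M₁] [Algebra k M₁]
    (N M : Subalgebra k M₁) (hNM : N ≤ M)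
    (EM : M₁ →ₗ[k] M₁)
    (hEM_mem : ∀ x : M₁, EM x ∈ M)
    (hEM_bimod : ∀ m ∈ M, ∀ m' ∈ M, ∀ x : M₁, EM (m * x * m') = m * EM x * m')
    (t : ℕ) (p q : Fin t → M₁)
    (hEM₁ : ∀ x : M₁, ∑ j, EM (x * p j) * q j = x)
    (hEM₂ : ∀ x : M₁, ∑ j, p j * EM (q j * x) = x)
    (r : ℕ) (z : Fin r → M₁)
    (hzN : ∀ i, ∀ n ∈ N, z i * n = n * z i)
    (hfree : ∀ x : M₁, ∃! c : Fin r → ↥M, x = ∑ i, z i * (c i : M₁)) :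
    ∃ w : Fin r → M₁,
      (∀ i, ∀ n ∈ N, w i * n = n * w i) ∧
      (∀ i j, EM (w i * z j) = if i = j then (1 : M₁) else 0) ∧
      (∀ x : M₁, ∑ i, EM (x * z i) * w i = x) ∧
      (∀ x : M₁, ∑ i, z i * EM (w i * x) = x) := by
  classical
  -- coordinate functions
  set cf : M₁ → Fin r → M₁ := fun x i => ((hfree x).choose i : M₁) with hcf
  have hmem : ∀ x i, cf x i ∈ M := fun x i => ((hfree x).choose i).2
  have hsum : ∀ x, x = ∑ i, z i * cf x i := fun x => (hfree x).choose_spec.1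
  have huniq : ∀ (x : M₁) (d : Fin r → M₁), (∀ i, d i ∈ M) → x = ∑ i, z i * d i →
      ∀ i, d i = cf x i := by
    intro x d hd heq i
    have h := (hfree x).choose_spec.2 (fun i => ⟨d i, hd i⟩) heq
    exact congrArg Subtype.val (congrFun h i)
  -- bimodule specializations
  have hL : ∀ m ∈ M, ∀ x : M₁, EM (m * x) = m * EM x := by
    intro m hm x
    have := hEM_bimod m hm 1 M.one_mem x
    simpa using this
  have hR : ∀ m ∈ M, ∀ x : M₁, EM (x * m) = EM x * m := by
    intro m hm x
    have := hEM_bimod 1 M.one_mem m hm x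
    simpa using this
  set w : Fin r → M₁ := fun i => ∑ j, cf (p j) i * q j with hw
  -- key : EM (w i * x) = cf x i
  have key : ∀ (x : M₁) (i : Fin r), EM (w i * x) = cf x i := by
    intro x i
    have h1 : EM (w i * x) = ∑ j, cf (p j) i * EM (q j * x) := by
      rw [hw]
      simp only [Finset.sum_mul, map_sum, mul_assoc]
      exact Finset.sum_congr rfl fun j _ => hL _ (hmem _ _) _
    rw [h1]
    refine huniq x (fun i => ∑ j, cf (p j) i * EM (q j * x)) ?_ ?_ i
    · intro i'
      exact Subalgebra.sum_mem M fun j _ => M.mul_mem (hmem _ _) (hEM_mem _)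
    · calc x = ∑ j, p j * EM (q j * x) := (hEM₂ x).symm
        _ = ∑ j, (∑ i, z i * cf (p j) i) * EM (q j * x) := by
            refine Finset.sum_congr rfl fun j _ => ?_
            rw [← hsum (p j)]
        _ = ∑ i, z i * ∑ j, cf (p j) i * EM (q j * x) := by
            simp only [Finset.sum_mul, Finset.mul_sum, mul_assoc]
            rw [Finset.sum_comm]
  -- coordinates of z j
  have hcz : ∀ i j, cf (z j) i = if i = j then (1 : M₁) else 0 := by
    intro i j
    refine (huniq (z j) (fun i => if i = j then (1 : M₁) else 0) (fun i => ?_) ?_ i).symm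
    · by_cases h : i = j <;> simp [h, M.one_mem, M.zero_mem]
    · simp
  refine ⟨w, ?_, ?_, ?_, ?_⟩
  · -- commutation with N
    intro i n hn
    have hnM : n ∈ M := hNM hn
    have hzero : ∀ x : M₁, EM ((w i * n - n * w i) * x) = 0 := by
      intro x
      have h1 : EM (w i * (n * x)) = cf (n * x) i := key _ _
      have h2 : cf (n * x) i = n * cf x i := by
        refine (huniq (n * x) (fun i => n * cf x i)
          (fun i => M.mul_mem hnM (hmem _ _)) ?_ i).symm
        calc n * x = n * ∑ i, z i * cf x i := by rw [← hsum]
          _ = ∑ i, z i * (n * cf x i) := by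
              rw [Finset.mul_sum]
              refine Finset.sum_congr rfl fun i _ => ?_
              rw [← mul_assoc, ← hzN i n hn, mul_assoc]
      have h3 : EM (n * (w i * x)) = n * cf x i := by
        rw [hL n hnM, key]
      rw [sub_mul, map_sub, mul_assoc, mul_assoc, h1, h2, h3, sub_self]
    have heq := hEM₁ (w i * n - n * w i)
    simp only [hzero, zero_mul, Finset.sum_const_zero] at heq
    exact sub_eq_zero.mp heq.symm
  · intro i j
    rw [key, hcz]
  · -- ∑ EM (x * z i) * w i = x
    intro x
    calc ∑ i, EM (x * z i) * w i
        = ∑ i, ∑ j, EM (x * (z i * cf (p j) i)) * q j := by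
          refine Finset.sum_congr rfl fun i _ => ?_
          simp only [hw, Finset.mul_sum]
          refine Finset.sum_congr rfl fun j _ => ?_
          rw [← mul_assoc, ← hR _ (hmem _ _), mul_assoc]
      _ = ∑ j, (∑ i, EM (x * (z i * cf (p j) i))) * q j := by
          rw [Finset.sum_comm]
          simp [Finset.sum_mul]
      _ = ∑ j, EM (x * p j) * q j := by
          refine Finset.sum_congr rfl fun j _ => ?_
          rw [← map_sum, ← Finset.mul_sum, ← hsum (p j)]
      _ = x := hEM₁ x
  · intro x
    calc ∑ i, z i * EM (w i * x) = ∑ i, z i * cf x i := by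
          simp only [key]
      _ = x := (hsum x).symm
end

section
/- In the depth-2 Jones tower setup, the centralizers A = C_{M₁}(N) and B = C_{M₂}(M) are finite-dimensional separable k-algebras. Explicitly: A and B are finite-dimensional over k, the restriction of E_M to A is a k-valued Frobenius homomorphism on A with dual bases {zᵢ}, {wᵢ}, λ ∑ᵢ zᵢ ⊗ wᵢ ∈ A ⊗_k A is a separability element for A (i.e., ∑ᵢ a zᵢ ⊗ wᵢ = ∑ᵢ zᵢ ⊗ wᵢ a in A ⊗_k A for all a ∈ A, and λ ∑ᵢ zᵢ wᵢ = 1), and likewise λ ∑ⱼ uⱼ ⊗ vⱼ ∈ B ⊗_k B is a separability element for B. -/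
open scoped TensorProduct

/-- The depth-2 Jones tower setup: a tower `N ⊆ M ⊆ M₁ ⊆ R` (with `R` playing the
role of `M₂`) of unital `k`-algebras, with conditional expectations, Jones idempotents,
braid-like relations and depth-2 orthogonal dual bases, as in the paper. -/
structure JonesTower (k : Type*) [Field k] (R : Type*) [Ring R] [Algebra k R] where
  N : Subalgebra k R
  M : Subalgebra k R
  M₁ : Subalgebra k R
  hNM : N ≤ M
  hMM₁ : M ≤ M₁
  lam : k
  hlam : lam ≠ 0
  E : R →ₗ[k] R
  EM : R →ₗ[k] R
  EM1 : R →ₗ[k] R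
  hE_mem : ∀ m ∈ M, E m ∈ N
  hEM_mem : ∀ x ∈ M₁, EM x ∈ M
  hEM1_mem : ∀ x : R, EM1 x ∈ M₁
  hE_one : E 1 = 1
  hEM_one : EM 1 = 1
  hEM1_one : EM1 1 = 1
  hE_bimod : ∀ n ∈ N, ∀ n' ∈ N, ∀ m ∈ M, E (n * m * n') = n * E m * n'
  hEM_bimod : ∀ m ∈ M, ∀ m' ∈ M, ∀ x ∈ M₁, EM (m * x * m') = m * EM x * m'
  hEM1_bimod : ∀ w ∈ M₁, ∀ w' ∈ M₁, ∀ x : R, EM1 (w * x * w') = w * EM1 x * w'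
  n₀ : ℕ
  xb : Fin n₀ → R
  yb : Fin n₀ → R
  hxb : ∀ i, xb i ∈ M
  hyb : ∀ i, yb i ∈ M
  hE_dual₁ : ∀ m ∈ M, ∑ i, E (m * xb i) * yb i = m
  hE_dual₂ : ∀ m ∈ M, ∑ i, xb i * E (yb i * m) = m
  hE_index : ∑ i, xb i * yb i = lam⁻¹ • (1 : R)
  hCMN : ∀ c ∈ M, (∀ n ∈ N, c * n = n * c) → ∃ μ : k, c = μ • (1 : R)
  hCM₁M : ∀ c ∈ M₁, (∀ m ∈ M, c * m = m * c) → ∃ μ : k, c = μ • (1 : R)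
  hCM₂M₁ : ∀ c : R, (∀ w ∈ M₁, c * w = w * c) → ∃ μ : k, c = μ • (1 : R)
  e₁ : R
  e₂ : R
  he₁ : e₁ ∈ M₁
  he₁N : ∀ n ∈ N, e₁ * n = n * e₁
  he₂M : ∀ m ∈ M, e₂ * m = m * e₂
  he₁me₁ : ∀ m ∈ M, e₁ * m * e₁ = E m * e₁
  he₂we₂ : ∀ w ∈ M₁, e₂ * w * e₂ = EM w * e₂
  hEMe₁ : EM e₁ = lam • (1 : R)
  hEM1e₂ : EM1 e₂ = lam • (1 : R)
  hspanM₁ : Subalgebra.toSubmodule M₁ =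
    Submodule.span k {x : R | ∃ m ∈ M, ∃ m' ∈ M, x = m * e₁ * m'}
  hspanM₂ : (⊤ : Submodule k R) =
    Submodule.span k {x : R | ∃ w ∈ M₁, ∃ w' ∈ M₁, x = w * e₂ * w'}
  hbraid₁ : e₁ * e₂ * e₁ = lam • e₁
  hbraid₂ : e₂ * e₁ * e₂ = lam • e₂
  r : ℕ
  zb : Fin r → R
  wb : Fin r → R
  hzbM₁ : ∀ i, zb i ∈ M₁
  hwbM₁ : ∀ i, wb i ∈ M₁
  hzbN : ∀ i, ∀ n ∈ N, zb i * n = n * zb i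
  hwbN : ∀ i, ∀ n ∈ N, wb i * n = n * wb i
  hzw_orth : ∀ i j, EM (wb i * zb j) = if i = j then (1 : R) else 0
  hzw_dual₁ : ∀ x ∈ M₁, ∑ i, EM (x * zb i) * wb i = x
  hzw_dual₂ : ∀ x ∈ M₁, ∑ i, zb i * EM (wb i * x) = x
  hzw_index : ∑ i, zb i * wb i = lam⁻¹ • (1 : R)
  s : ℕ
  ub : Fin s → R
  vb : Fin s → R
  hubM : ∀ i, ∀ m ∈ M, ub i * m = m * ub i
  hvbM : ∀ i, ∀ m ∈ M, vb i * m = m * vb i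
  huv_orth : ∀ i j, EM1 (vb i * ub j) = if i = j then (1 : R) else 0
  huv_dual₁ : ∀ x : R, ∑ i, EM1 (x * ub i) * vb i = x
  huv_dual₂ : ∀ x : R, ∑ i, ub i * EM1 (vb i * x) = x
  huv_index : ∑ i, ub i * vb i = lam⁻¹ • (1 : R)
  F : R →ₗ[k] k
  hF : ∀ c : R, (∀ n ∈ N, c * n = n * c) → algebraMap k R (F c) = EM (EM1 c)

variable {k : Type*} [Field k] {R : Type*} [Ring R] [Algebra k R]

/-- The second centralizer `A = C_{M₁}(N)`. -/
def JonesTower.A (T : JonesTower k R) : Subalgebra k R :=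
  T.M₁ ⊓ Subalgebra.centralizer k (T.N : Set R)

/-- The second centralizer `B = C_{M₂}(M)`. -/
def JonesTower.B (T : JonesTower k R) : Subalgebra k R :=
  Subalgebra.centralizer k (T.M : Set R)

/-- The big centralizer `C = C_{M₂}(N)`. -/
def JonesTower.C (T : JonesTower k R) : Subalgebra k R :=
  Subalgebra.centralizer k (T.N : Set R)

private lemma casimir_aux {n : ℕ} (z w : Fin n → R) (a : R)
    (μ : Fin n → Fin n → k)
    (hd1 : ∀ j, w j * a = ∑ i, μ j i • w i)
    (hd2 : ∀ i, a * z i = ∑ j, μ j i • z j) :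
    ∑ i, (a * z i) ⊗ₜ[k] w i = ∑ i, z i ⊗ₜ[k] (w i * a) := by
  calc ∑ i, (a * z i) ⊗ₜ[k] w i
      = ∑ i, (∑ j, μ j i • z j) ⊗ₜ[k] w i := by simp_rw [hd2]
    _ = ∑ i, ∑ j, z j ⊗ₜ[k] (μ j i • w i) := by
        simp [TensorProduct.sum_tmul, TensorProduct.smul_tmul]
    _ = ∑ j, z j ⊗ₜ[k] (∑ i, μ j i • w i) := by
        rw [Finset.sum_comm]; simp [TensorProduct.tmul_sum]
    _ = ∑ j, z j ⊗ₜ[k] (w j * a) := by simp_rw [hd1]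

/-- `A = C_{M₁}(N)` and `B = C_{M₂}(M)` are finite-dimensional separable `k`-algebras:
`E_M` restricted to `A` is a `k`-valued Frobenius homomorphism with dual bases
`{zᵢ}, {wᵢ}`, `λ ∑ᵢ zᵢ ⊗ wᵢ` is a separability element for `A` (viewed inside
`R ⊗[k] R`, which contains `A ⊗[k] A`), and likewise `λ ∑ⱼ uⱼ ⊗ vⱼ` is a
separability element for `B`. -/
theorem second_centralizers_separable (T : JonesTower k R) [Nontrivial R] :
    FiniteDimensional k ↥T.A ∧ FiniteDimensional k ↥T.B ∧
    (∀ a ∈ T.A, ∃ μ : k, T.EM a = μ • (1 : R)) ∧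
    (∀ a ∈ T.A, ∑ i, T.EM (a * T.zb i) * T.wb i = a ∧
      ∑ i, T.zb i * T.EM (T.wb i * a) = a) ∧
    (∀ a ∈ T.A, ∑ i, (a * T.zb i) ⊗ₜ[k] T.wb i = ∑ i, T.zb i ⊗ₜ[k] (T.wb i * a)) ∧
    T.lam • ∑ i, T.zb i * T.wb i = (1 : R) ∧
    (∀ b ∈ T.B, ∃ μ : k, T.EM1 b = μ • (1 : R)) ∧
    (∀ b ∈ T.B, ∑ j, (b * T.ub j) ⊗ₜ[k] T.vb j = ∑ j, T.ub j ⊗ₜ[k] (T.vb j * b)) ∧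
    T.lam • ∑ j, T.ub j * T.vb j = (1 : R) := by
  
  -- scalar lemmas
  have scalA : ∀ x ∈ T.M₁, (∀ n ∈ T.N, x * n = n * x) → ∃ μ : k, T.EM x = μ • (1 : R) := by
    intro x hx hcomm
    refine T.hCMN (T.EM x) (T.hEM_mem x hx) ?_
    intro n hn
    have hnM : n ∈ T.M := T.hNM hn
    have h1 : T.EM x * n = T.EM (x * n) := by
      have := T.hEM_bimod 1 (one_mem _) n hnM x hx
      simpa using this.symm
    have h2 : T.EM (n * x) = n * T.EM x := by
      have := T.hEM_bimod n hnM 1 (one_mem _) x hx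
      simpa using this
    rw [h1, hcomm n hn, h2]
  have scalB : ∀ x : R, (∀ m ∈ T.M, x * m = m * x) → ∃ μ : k, T.EM1 x = μ • (1 : R) := by
    intro x hcomm
    refine T.hCM₁M (T.EM1 x) (T.hEM1_mem x) ?_
    intro m hm
    have hmM₁ : m ∈ T.M₁ := T.hMM₁ hm
    have h1 : T.EM1 x * m = T.EM1 (x * m) := by
      have := T.hEM1_bimod 1 (one_mem _) m hmM₁ x
      simpa using this.symm
    have h2 : T.EM1 (m * x) = m * T.EM1 x := by
      have := T.hEM1_bimod m hmM₁ 1 (one_mem _) x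
      simpa using this
    rw [h1, hcomm m hm, h2]
  -- membership facts for A
  have hAmem : ∀ a ∈ T.A, a ∈ T.M₁ ∧ ∀ n ∈ T.N, a * n = n * a := by
    intro a ha
    rw [JonesTower.A, Algebra.mem_inf] at ha
    exact ⟨ha.1, fun n hn => (Subalgebra.mem_centralizer_iff k |>.mp ha.2 n hn).symm⟩
  have hBmem : ∀ b ∈ T.B, ∀ m ∈ T.M, b * m = m * b := by
    intro b hb m hm
    exact (Subalgebra.mem_centralizer_iff k |>.mp hb m hm).symm
  -- scalar values of EM on w j * a * z i for a ∈ A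
  have hAscal : ∀ a ∈ T.A, ∀ x ∈ T.M₁, (∀ n ∈ T.N, x * n = n * x) →
      (∃ μ : k, T.EM (x * a) = μ • (1 : R)) ∧ (∃ μ : k, T.EM (a * x) = μ • (1 : R)) := by
    intro a ha x hx hxc
    obtain ⟨haM₁, hac⟩ := hAmem a ha
    constructor
    · refine scalA _ (mul_mem hx haM₁) ?_
      intro n hn
      rw [mul_assoc, hac n hn, ← mul_assoc, hxc n hn, mul_assoc]
    · refine scalA _ (mul_mem haM₁ hx) ?_
      intro n hn
      rw [mul_assoc, hxc n hn, ← mul_assoc, hac n hn, mul_assoc]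
  -- Finite dimensionality of A
  have hAfd : FiniteDimensional k ↥T.A := by
    have hle : Subalgebra.toSubmodule T.A ≤ Submodule.span k (Set.range T.zb) := by
      intro a ha
      rw [Subalgebra.mem_toSubmodule] at ha
      obtain ⟨haM₁, hac⟩ := hAmem a ha
      have key : a = ∑ i, T.zb i * T.EM (T.wb i * a) := (T.hzw_dual₂ a haM₁).symm
      have : ∀ i, ∃ μ : k, T.EM (T.wb i * a) = μ • (1 : R) := by
        intro i
        refine scalA _ (mul_mem (T.hwbM₁ i) haM₁) ?_
        intro n hn
        rw [mul_assoc, hac n hn, ← mul_assoc, T.hwbN i n hn, mul_assoc]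
      choose μ hμ using this
      rw [key]
      refine Submodule.sum_mem _ fun i _ => ?_
      rw [hμ i, mul_smul_comm, mul_one]
      exact Submodule.smul_mem _ _ (Submodule.subset_span ⟨i, rfl⟩)
    have hfd : FiniteDimensional k ↥(Submodule.span k (Set.range T.zb)) :=
      FiniteDimensional.span_of_finite k (Set.finite_range _)
    have := Submodule.finiteDimensional_of_le hle
    exact this
  -- Finite dimensionality of B
  have hBfd : FiniteDimensional k ↥T.B := by
    have hle : Subalgebra.toSubmodule T.B ≤ Submodule.span k (Set.range T.ub) := by
      intro b hb
      rw [Subalgebra.mem_toSubmodule] at hb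
      have hbc := hBmem b hb
      have key : b = ∑ i, T.ub i * T.EM1 (T.vb i * b) := (T.huv_dual₂ b).symm
      have : ∀ i, ∃ μ : k, T.EM1 (T.vb i * b) = μ • (1 : R) := by
        intro i
        refine scalB _ ?_
        intro m hm
        rw [mul_assoc, hbc m hm, ← mul_assoc, T.hvbM i m hm, mul_assoc]
      choose μ hμ using this
      rw [key]
      refine Submodule.sum_mem _ fun i _ => ?_
      rw [hμ i, mul_smul_comm, mul_one]
      exact Submodule.smul_mem _ _ (Submodule.subset_span ⟨i, rfl⟩)
    have hfd : FiniteDimensional k ↥(Submodule.span k (Set.range T.ub)) :=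
      FiniteDimensional.span_of_finite k (Set.finite_range _)
    have := Submodule.finiteDimensional_of_le hle
    exact this
  refine ⟨hAfd, hBfd, ?_, ?_, ?_, ?_, ?_, ?_, ?_⟩
  · -- EM a scalar
    intro a ha
    obtain ⟨haM₁, hac⟩ := hAmem a ha
    exact scalA a haM₁ hac
  · -- dual basis equations for a ∈ A
    intro a ha
    obtain ⟨haM₁, _⟩ := hAmem a ha
    exact ⟨T.hzw_dual₁ a haM₁, T.hzw_dual₂ a haM₁⟩
  · -- Casimir for A
    intro a ha
    obtain ⟨haM₁, hac⟩ := hAmem a ha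
    have hμ : ∀ j i, ∃ μ : k, T.EM (T.wb j * a * T.zb i) = μ • (1 : R) := by
      intro j i
      have hx : T.wb j * a ∈ T.M₁ := mul_mem (T.hwbM₁ j) haM₁
      have hxc : ∀ n ∈ T.N, (T.wb j * a) * n = n * (T.wb j * a) := by
        intro n hn
        rw [mul_assoc, hac n hn, ← mul_assoc, T.hwbN j n hn, mul_assoc]
      exact (hAscal (T.wb j * a) (by
        rw [JonesTower.A, Algebra.mem_inf]
        exact ⟨hx, (Subalgebra.mem_centralizer_iff k).mpr fun g hg => (hxc g hg).symm⟩)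
        (T.zb i) (T.hzbM₁ i) (T.hzbN i)).2
    choose μ hμ using hμ
    refine casimir_aux T.zb T.wb a μ ?_ ?_
    · intro j
      have := T.hzw_dual₁ (T.wb j * a) (mul_mem (T.hwbM₁ j) haM₁)
      rw [← this]
      refine Finset.sum_congr rfl fun i _ => ?_
      rw [hμ j i, smul_mul_assoc, one_mul]
    · intro i
      have := T.hzw_dual₂ (a * T.zb i) (mul_mem haM₁ (T.hzbM₁ i))
      rw [← this]
      refine Finset.sum_congr rfl fun j _ => ?_
      rw [← mul_assoc, hμ j i, mul_smul_comm, mul_one]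
  · rw [T.hzw_index, smul_smul, mul_inv_cancel₀ T.hlam, one_smul]
  · -- EM1 b scalar
    intro b hb
    exact scalB b (hBmem b hb)
  · -- Casimir for B
    intro b hb
    have hbc := hBmem b hb
    have hμ : ∀ j i, ∃ μ : k, T.EM1 (T.vb j * b * T.ub i) = μ • (1 : R) := by
      intro j i
      refine scalB _ ?_
      intro m hm
      rw [mul_assoc, T.hubM i m hm, ← mul_assoc, mul_assoc (T.vb j), hbc m hm,
        ← mul_assoc, T.hvbM j m hm, mul_assoc, mul_assoc, mul_assoc]
    choose μ hμ using hμ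
    refine casimir_aux T.ub T.vb b μ ?_ ?_
    · intro j
      have := T.huv_dual₁ (T.vb j * b)
      rw [← this]
      refine Finset.sum_congr rfl fun i _ => ?_
      rw [hμ j i, smul_mul_assoc, one_mul]
    · intro i
      have := T.huv_dual₂ (b * T.ub i)
      rw [← this]
      refine Finset.sum_congr rfl fun j _ => ?_
      rw [← mul_assoc, hμ j i, mul_smul_comm, mul_one]
  · rw [T.huv_index, smul_smul, mul_inv_cancel₀ T.hlam, one_smul]
end

section
/- In the depth-2 Jones tower setup, the multiplication map M ⊗_k A → M₁, m ⊗ a ↦ ma, is a k-linear bijection (indeed an isomorphism of M-A-bimodules), and the multiplication map M₁ ⊗_k B → M₂, y ⊗ b ↦ yb, is a k-linear bijection (an isomorphism of M₁-B-bimodules). -/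
open scoped TensorProduct

variable {k : Type*} [Field k] {R : Type*} [Ring R] [Algebra k R]

namespace JonesTower

variable (T : JonesTower k R)

lemma wb_mem_A (i : Fin T.r) : T.wb i ∈ T.A :=
  Algebra.mem_inf.mpr ⟨T.hwbM₁ i,
    (Subalgebra.mem_centralizer_iff (R := k)).mpr fun n hn => (T.hwbN i n hn).symm⟩

lemma vb_mem_B (i : Fin T.s) : T.vb i ∈ T.B :=
  (Subalgebra.mem_centralizer_iff (R := k)).mpr fun m hm => (T.hvbM i m hm).symm

lemma mem_M₁_of_mem_A {a : R} (ha : a ∈ T.A) : a ∈ T.M₁ := (Algebra.mem_inf.mp ha).1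

lemma A_comm {a : R} (ha : a ∈ T.A) {n : R} (hn : n ∈ T.N) : n * a = a * n :=
  (Subalgebra.mem_centralizer_iff (R := k)).mp (Algebra.mem_inf.mp ha).2 n hn

lemma B_comm {b : R} (hb : b ∈ T.B) {m : R} (hm : m ∈ T.M) : m * b = b * m :=
  (Subalgebra.mem_centralizer_iff (R := k)).mp hb m hm

/-- The inverse of the first multiplication map: `x ↦ ∑ᵢ E_M(x zᵢ) ⊗ wᵢ`. -/
noncomputable def g1 : ↥(Subalgebra.toSubmodule T.M₁) →ₗ[k]
    ↥(Subalgebra.toSubmodule T.M) ⊗[k] ↥(Subalgebra.toSubmodule T.A) :=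
  ∑ i : Fin T.r,
    ((TensorProduct.mk k ↥(Subalgebra.toSubmodule T.M) ↥(Subalgebra.toSubmodule T.A)).flip
        ⟨T.wb i, T.wb_mem_A i⟩) ∘ₗ
      LinearMap.codRestrict (Subalgebra.toSubmodule T.M)
        (T.EM ∘ₗ LinearMap.mulRight k (T.zb i) ∘ₗ (Subalgebra.toSubmodule T.M₁).subtype)
        (fun x => T.hEM_mem _ (T.M₁.mul_mem x.2 (T.hzbM₁ i)))

lemma g1_apply (x : ↥(Subalgebra.toSubmodule T.M₁)) :
    T.g1 x = ∑ i : Fin T.r,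
      (⟨T.EM (x.1 * T.zb i), T.hEM_mem _ (T.M₁.mul_mem x.2 (T.hzbM₁ i))⟩ :
        ↥(Subalgebra.toSubmodule T.M)) ⊗ₜ[k]
        (⟨T.wb i, T.wb_mem_A i⟩ : ↥(Subalgebra.toSubmodule T.A)) := by
  simp only [g1, LinearMap.sum_apply]
  rfl

/-- The inverse of the second multiplication map: `x ↦ ∑ᵢ E_{M₁}(x uᵢ) ⊗ vᵢ`. -/
noncomputable def g2 : R →ₗ[k]
    ↥(Subalgebra.toSubmodule T.M₁) ⊗[k] ↥(Subalgebra.toSubmodule T.B) :=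
  ∑ i : Fin T.s,
    ((TensorProduct.mk k ↥(Subalgebra.toSubmodule T.M₁) ↥(Subalgebra.toSubmodule T.B)).flip
        ⟨T.vb i, T.vb_mem_B i⟩) ∘ₗ
      LinearMap.codRestrict (Subalgebra.toSubmodule T.M₁)
        (T.EM1 ∘ₗ LinearMap.mulRight k (T.ub i))
        (fun x => T.hEM1_mem _)

lemma g2_apply (x : R) :
    T.g2 x = ∑ i : Fin T.s,
      (⟨T.EM1 (x * T.ub i), T.hEM1_mem _⟩ : ↥(Subalgebra.toSubmodule T.M₁)) ⊗ₜ[k]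
        (⟨T.vb i, T.vb_mem_B i⟩ : ↥(Subalgebra.toSubmodule T.B)) := by
  simp only [g2, LinearMap.sum_apply]
  rfl

lemma g1_mul (m : ↥(Subalgebra.toSubmodule T.M)) (a : ↥(Subalgebra.toSubmodule T.A)) :
    T.g1 ⟨m.1 * a.1, T.M₁.mul_mem (T.hMM₁ m.2) (T.mem_M₁_of_mem_A a.2)⟩ = m ⊗ₜ[k] a := by
  have haM₁ : a.1 ∈ T.M₁ := T.mem_M₁_of_mem_A a.2
  -- the coefficients E_M(a zᵢ) are scalars
  have hcomm : ∀ i : Fin T.r, ∀ n ∈ T.N, T.EM (a.1 * T.zb i) * n = n * T.EM (a.1 * T.zb i) := by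
    intro i n hn
    have h1 : T.EM ((1 : R) * (a.1 * T.zb i) * n) = 1 * T.EM (a.1 * T.zb i) * n :=
      T.hEM_bimod 1 (one_mem _) n (T.hNM hn) _ (T.M₁.mul_mem haM₁ (T.hzbM₁ i))
    have h2 : T.EM (n * (a.1 * T.zb i) * (1 : R)) = n * T.EM (a.1 * T.zb i) * 1 :=
      T.hEM_bimod n (T.hNM hn) 1 (one_mem _) _ (T.M₁.mul_mem haM₁ (T.hzbM₁ i))
    have h3 : (1 : R) * (a.1 * T.zb i) * n = n * (a.1 * T.zb i) * 1 := by
      rw [one_mul, mul_one, mul_assoc, T.hzbN i n hn, ← mul_assoc, ← T.A_comm a.2 hn, mul_assoc]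
    rw [mul_one, mul_one] at h2
    rw [one_mul, one_mul] at h1
    rw [one_mul, mul_one] at h3
    rw [← h1, h3, h2]
  choose μ hμ using fun i : Fin T.r =>
    T.hCMN (T.EM (a.1 * T.zb i)) (T.hEM_mem _ (T.M₁.mul_mem haM₁ (T.hzbM₁ i)))
      (fun n hn => hcomm i n hn)
  rw [g1_apply]
  have hterm : ∀ i : Fin T.r,
      (⟨T.EM ((m.1 * a.1) * T.zb i),
          T.hEM_mem _ (T.M₁.mul_mem (T.M₁.mul_mem (T.hMM₁ m.2) haM₁) (T.hzbM₁ i))⟩ :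
        ↥(Subalgebra.toSubmodule T.M)) ⊗ₜ[k]
        (⟨T.wb i, T.wb_mem_A i⟩ : ↥(Subalgebra.toSubmodule T.A)) =
      m ⊗ₜ[k] (μ i • (⟨T.wb i, T.wb_mem_A i⟩ : ↥(Subalgebra.toSubmodule T.A))) := by
    intro i
    have hEMval : T.EM ((m.1 * a.1) * T.zb i) = μ i • m.1 := by
      have hb : T.EM (m.1 * (a.1 * T.zb i) * 1) = m.1 * T.EM (a.1 * T.zb i) * 1 :=
        T.hEM_bimod m.1 m.2 1 (one_mem _) _ (T.M₁.mul_mem haM₁ (T.hzbM₁ i))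
      rw [mul_one, mul_one] at hb
      rw [mul_assoc, hb, hμ i, mul_smul_comm, mul_one]
    have h1 : (⟨T.EM ((m.1 * a.1) * T.zb i),
        T.hEM_mem _ (T.M₁.mul_mem (T.M₁.mul_mem (T.hMM₁ m.2) haM₁) (T.hzbM₁ i))⟩ :
        ↥(Subalgebra.toSubmodule T.M)) = μ i • m :=
      Subtype.ext hEMval
    rw [h1, TensorProduct.smul_tmul]
  rw [Finset.sum_congr rfl fun i _ => hterm i, ← TensorProduct.tmul_sum]
  congr 1
  apply Subtype.ext
  have : ((∑ i : Fin T.r, μ i • (⟨T.wb i, T.wb_mem_A i⟩ : ↥(Subalgebra.toSubmodule T.A))) :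
      ↥(Subalgebra.toSubmodule T.A)).1 = ∑ i : Fin T.r, μ i • T.wb i := by
    simp
  rw [this]
  have hdual := T.hzw_dual₁ a.1 haM₁
  calc ∑ i : Fin T.r, μ i • T.wb i
      = ∑ i : Fin T.r, T.EM (a.1 * T.zb i) * T.wb i := by
        refine Finset.sum_congr rfl fun i _ => ?_
        rw [hμ i, smul_mul_assoc, one_mul]
    _ = a.1 := hdual

lemma g2_mul (y : ↥(Subalgebra.toSubmodule T.M₁)) (b : ↥(Subalgebra.toSubmodule T.B)) :
    T.g2 (y.1 * b.1) = y ⊗ₜ[k] b := by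
  have hcomm : ∀ i : Fin T.s, ∀ m ∈ T.M,
      T.EM1 (b.1 * T.ub i) * m = m * T.EM1 (b.1 * T.ub i) := by
    intro i m hm
    have h1 : T.EM1 ((1 : R) * (b.1 * T.ub i) * m) = 1 * T.EM1 (b.1 * T.ub i) * m :=
      T.hEM1_bimod 1 (one_mem _) m (T.hMM₁ hm) _
    have h2 : T.EM1 (m * (b.1 * T.ub i) * (1 : R)) = m * T.EM1 (b.1 * T.ub i) * 1 :=
      T.hEM1_bimod m (T.hMM₁ hm) 1 (one_mem _) _
    have h3 : (1 : R) * (b.1 * T.ub i) * m = m * (b.1 * T.ub i) * 1 := by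
      rw [one_mul, mul_one, mul_assoc, T.hubM i m hm, ← mul_assoc, ← T.B_comm b.2 hm, mul_assoc]
    rw [mul_one, mul_one] at h2
    rw [one_mul, one_mul] at h1
    rw [one_mul, mul_one] at h3
    rw [← h1, h3, h2]
  choose μ hμ using fun i : Fin T.s =>
    T.hCM₁M (T.EM1 (b.1 * T.ub i)) (T.hEM1_mem _) (fun m hm => hcomm i m hm)
  rw [g2_apply]
  have hterm : ∀ i : Fin T.s,
      (⟨T.EM1 ((y.1 * b.1) * T.ub i), T.hEM1_mem _⟩ : ↥(Subalgebra.toSubmodule T.M₁)) ⊗ₜ[k]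
        (⟨T.vb i, T.vb_mem_B i⟩ : ↥(Subalgebra.toSubmodule T.B)) =
      y ⊗ₜ[k] (μ i • (⟨T.vb i, T.vb_mem_B i⟩ : ↥(Subalgebra.toSubmodule T.B))) := by
    intro i
    have hEMval : T.EM1 ((y.1 * b.1) * T.ub i) = μ i • y.1 := by
      have hb : T.EM1 (y.1 * (b.1 * T.ub i) * 1) = y.1 * T.EM1 (b.1 * T.ub i) * 1 :=
        T.hEM1_bimod y.1 y.2 1 (one_mem _) _
      rw [mul_one, mul_one] at hb
      rw [mul_assoc, hb, hμ i, mul_smul_comm, mul_one]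
    have h1 : (⟨T.EM1 ((y.1 * b.1) * T.ub i), T.hEM1_mem _⟩ :
        ↥(Subalgebra.toSubmodule T.M₁)) = μ i • y :=
      Subtype.ext hEMval
    rw [h1, TensorProduct.smul_tmul]
  rw [Finset.sum_congr rfl fun i _ => hterm i, ← TensorProduct.tmul_sum]
  congr 1
  apply Subtype.ext
  have : ((∑ i : Fin T.s, μ i • (⟨T.vb i, T.vb_mem_B i⟩ : ↥(Subalgebra.toSubmodule T.B))) :
      ↥(Subalgebra.toSubmodule T.B)).1 = ∑ i : Fin T.s, μ i • T.vb i := by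
    simp
  rw [this]
  calc ∑ i : Fin T.s, μ i • T.vb i
      = ∑ i : Fin T.s, T.EM1 (b.1 * T.ub i) * T.vb i := by
        refine Finset.sum_congr rfl fun i _ => ?_
        rw [hμ i, smul_mul_assoc, one_mul]
    _ = b.1 := T.huv_dual₁ b.1

end JonesTower

/-- The multiplication maps `M ⊗ₖ A → M₁` and `M₁ ⊗ₖ B → M₂` are `k`-linear
bijections (onto `M₁`, resp. onto all of `M₂ = R`). -/
theorem tensor_product_decompositions (T : JonesTower k R) [Nontrivial R] :
    (Function.Injective
        ((Subalgebra.toSubmodule T.M).mulMap (Subalgebra.toSubmodule T.A)) ∧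
      LinearMap.range
        ((Subalgebra.toSubmodule T.M).mulMap (Subalgebra.toSubmodule T.A)) =
        Subalgebra.toSubmodule T.M₁) ∧
    (Function.Injective
        ((Subalgebra.toSubmodule T.M₁).mulMap (Subalgebra.toSubmodule T.B)) ∧
      LinearMap.range
        ((Subalgebra.toSubmodule T.M₁).mulMap (Subalgebra.toSubmodule T.B)) = ⊤) := by
  constructor
  · -- first multiplication map
    have hle : Subalgebra.toSubmodule T.M * Subalgebra.toSubmodule T.A ≤
        Subalgebra.toSubmodule T.M₁ :=
      Submodule.mul_le.2 fun m hm a ha => T.M₁.mul_mem (T.hMM₁ hm) (T.mem_M₁_of_mem_A ha)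
    have hmem : ∀ t, (Subalgebra.toSubmodule T.M).mulMap (Subalgebra.toSubmodule T.A) t ∈
        Subalgebra.toSubmodule T.M₁ := by
      intro t
      refine hle ?_
      rw [← Submodule.mulMap_range]
      exact LinearMap.mem_range_self _ t
    set f : ↥(Subalgebra.toSubmodule T.M) ⊗[k] ↥(Subalgebra.toSubmodule T.A) →ₗ[k]
        ↥(Subalgebra.toSubmodule T.M₁) :=
      LinearMap.codRestrict _ ((Subalgebra.toSubmodule T.M).mulMap (Subalgebra.toSubmodule T.A))
        hmem with hf
    have hid : T.g1 ∘ₗ f = LinearMap.id := by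
      apply TensorProduct.ext'
      intro m a
      have hfval : f (m ⊗ₜ[k] a) =
          ⟨m.1 * a.1, T.M₁.mul_mem (T.hMM₁ m.2) (T.mem_M₁_of_mem_A a.2)⟩ := by
        apply Subtype.ext
        simp [hf]
      rw [LinearMap.comp_apply, hfval, LinearMap.id_apply, T.g1_mul]
    constructor
    · intro x y hxy
      have hx := LinearMap.congr_fun hid x
      have hy := LinearMap.congr_fun hid y
      rw [LinearMap.comp_apply, LinearMap.id_apply] at hx hy
      have hfx : f x = f y := Subtype.ext hxy
      rw [← hx, ← hy, hfx]
    · rw [Submodule.mulMap_range]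
      refine le_antisymm hle ?_
      intro x hx
      have hxM₁ : x ∈ T.M₁ := hx
      rw [← T.hzw_dual₁ x hxM₁]
      refine Submodule.sum_mem _ fun i _ => ?_
      exact Submodule.mul_mem_mul (T.hEM_mem _ (T.M₁.mul_mem hxM₁ (T.hzbM₁ i))) (T.wb_mem_A i)
  · -- second multiplication map
    constructor
    · intro x y hxy
      have hid : T.g2 ∘ₗ (Subalgebra.toSubmodule T.M₁).mulMap (Subalgebra.toSubmodule T.B) =
          LinearMap.id := by
        apply TensorProduct.ext'
        intro m b
        rw [LinearMap.comp_apply, Submodule.mulMap_tmul, LinearMap.id_apply, T.g2_mul]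
      have hx := LinearMap.congr_fun hid x
      have hy := LinearMap.congr_fun hid y
      rw [LinearMap.comp_apply, LinearMap.id_apply] at hx hy
      rw [← hx, ← hy, hxy]
    · rw [Submodule.mulMap_range, eq_top_iff]
      intro x _
      rw [← T.huv_dual₁ x]
      refine Submodule.sum_mem _ fun i _ => ?_
      exact Submodule.mul_mem_mul (T.hEM1_mem _) (T.vb_mem_B i)
end

section
/- (Depth 2 property.) In the depth-2 Jones tower setup: C = spanₖ{a e₂ a' : a, a' ∈ A} and C = spanₖ{b e₁ b' : b, b' ∈ B}; moreover e₁ c e₁ = e₁ E_{M₁}(c) for every c ∈ C. -/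
open scoped TensorProduct

variable {k : Type*} [Field k] {R : Type*} [Ring R] [Algebra k R]

namespace JonesTower

variable (T : JonesTower k R)

lemma memM_of_N {n : R} (hn : n ∈ T.N) : n ∈ T.M := T.hNM hn

lemma memM₁_of_N {n : R} (hn : n ∈ T.N) : n ∈ T.M₁ := T.hMM₁ (T.hNM hn)

lemma EM1_lmul (w : R) (hw : w ∈ T.M₁) (x : R) : T.EM1 (w * x) = w * T.EM1 x := by
  simpa using T.hEM1_bimod w hw 1 (one_mem _) x

lemma EM1_rmul (w : R) (hw : w ∈ T.M₁) (x : R) : T.EM1 (x * w) = T.EM1 x * w := by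
  simpa using T.hEM1_bimod 1 (one_mem _) w hw x

lemma EM_lmul (m : R) (hm : m ∈ T.M) (x : R) (hx : x ∈ T.M₁) :
    T.EM (m * x) = m * T.EM x := by
  simpa using T.hEM_bimod m hm 1 (one_mem _) x hx

lemma EM_rmul (m : R) (hm : m ∈ T.M) (x : R) (hx : x ∈ T.M₁) :
    T.EM (x * m) = T.EM x * m := by
  simpa using T.hEM_bimod 1 (one_mem _) m hm x hx

lemma e₁_idem : T.e₁ * T.e₁ = T.e₁ := by
  simpa [T.hE_one] using T.he₁me₁ 1 (one_mem _)

lemma e₁_ne [Nontrivial R] : T.e₁ ≠ 0 := by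
  intro h
  have h2 : T.lam • (1 : R) = 0 := by rw [← T.hEMe₁, h, map_zero]
  rcases smul_eq_zero.mp h2 with h' | h'
  · exact T.hlam h'
  · exact one_ne_zero h'

lemma smul_e₁_cancel [Nontrivial R] {α β : k} (h : α • T.e₁ = β • T.e₁) : α = β := by
  by_contra hne
  have h0 : (α - β) • T.e₁ = 0 := by rw [sub_smul, h, sub_self]
  rcases smul_eq_zero.mp h0 with h' | h'
  · exact hne (sub_eq_zero.mp h')
  · exact T.e₁_ne h'

lemma mem_A_iff (a : R) :
    a ∈ T.A ↔ a ∈ T.M₁ ∧ ∀ n ∈ T.N, n * a = a * n := by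
  constructor
  · intro h
    exact ⟨h.1, fun n hn => (Subalgebra.mem_centralizer_iff k).mp h.2 n hn⟩
  · intro h
    exact ⟨h.1, (Subalgebra.mem_centralizer_iff k).mpr h.2⟩

lemma mem_B_iff (b : R) : b ∈ T.B ↔ ∀ m ∈ T.M, m * b = b * m :=
  Subalgebra.mem_centralizer_iff k

lemma mem_C_iff (c : R) : c ∈ T.C ↔ ∀ n ∈ T.N, n * c = c * n :=
  Subalgebra.mem_centralizer_iff k

/-- Pull-down: `w e₁ = λ⁻¹ E_M(w e₁) e₁` for `w ∈ M₁`. -/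
lemma pullR (w : R) (hw : w ∈ T.M₁) :
    w * T.e₁ = T.lam⁻¹ • (T.EM (w * T.e₁) * T.e₁) := by
  have hw' : w ∈ Submodule.span k {x : R | ∃ m ∈ T.M, ∃ m' ∈ T.M, x = m * T.e₁ * m'} := by
    rw [← T.hspanM₁]; exact hw
  clear hw
  induction hw' using Submodule.span_induction with
  | mem x hx =>
    obtain ⟨m, hm, m', hm', rfl⟩ := hx
    have h1 : m * T.e₁ * m' * T.e₁ = m * T.E m' * T.e₁ := by
      calc m * T.e₁ * m' * T.e₁ = m * (T.e₁ * m' * T.e₁) := by simp [mul_assoc]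
        _ = m * (T.E m' * T.e₁) := by rw [T.he₁me₁ m' hm']
        _ = m * T.E m' * T.e₁ := by rw [mul_assoc]
    have hmem : m * T.E m' ∈ T.M := mul_mem hm (T.hNM (T.hE_mem m' hm'))
    rw [h1, T.EM_lmul _ hmem _ T.he₁, T.hEMe₁, mul_smul_comm, mul_one, smul_mul_assoc,
      smul_smul, inv_mul_cancel₀ T.hlam, one_smul]
  | zero => simp
  | add x y hx hy ihx ihy =>
    rw [add_mul, map_add, add_mul, smul_add, ← ihx, ← ihy]
  | smul r x hx ih =>
    rw [smul_mul_assoc, map_smul, smul_mul_assoc, smul_comm, ← ih]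

/-- Pull-down: `e₁ w = λ⁻¹ e₁ E_M(e₁ w)` for `w ∈ M₁`. -/
lemma pullL (w : R) (hw : w ∈ T.M₁) :
    T.e₁ * w = T.lam⁻¹ • (T.e₁ * T.EM (T.e₁ * w)) := by
  have hw' : w ∈ Submodule.span k {x : R | ∃ m ∈ T.M, ∃ m' ∈ T.M, x = m * T.e₁ * m'} := by
    rw [← T.hspanM₁]; exact hw
  clear hw
  induction hw' using Submodule.span_induction with
  | mem x hx =>
    obtain ⟨m, hm, m', hm', rfl⟩ := hx
    have h1 : T.e₁ * (m * T.e₁ * m') = T.E m * T.e₁ * m' := by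
      rw [← mul_assoc, ← mul_assoc, T.he₁me₁ m hm]
    have hmem : T.E m * T.e₁ * m' ∈ T.M₁ :=
      mul_mem (mul_mem (T.hMM₁ (T.hNM (T.hE_mem m hm))) T.he₁) (T.hMM₁ hm')
    have h2 : T.EM (T.E m * T.e₁ * m') = T.lam • (T.E m * m') := by
      rw [T.hEM_bimod (T.E m) (T.hNM (T.hE_mem m hm)) m' hm' T.e₁ T.he₁, T.hEMe₁,
        mul_smul_comm, mul_one, smul_mul_assoc]
    rw [h1, h2, mul_smul_comm, smul_smul, inv_mul_cancel₀ T.hlam, one_smul,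
      ← mul_assoc, T.he₁N (T.E m) (T.hE_mem m hm)]
  | zero => simp
  | add x y hx hy ihx ihy =>
    rw [mul_add, map_add, mul_add, smul_add, ← ihx, ← ihy]
  | smul r x hx ih =>
    rw [mul_smul_comm, map_smul, mul_smul_comm, smul_comm, ← ih]

/-- For `a ∈ A`, `a e₁` is a scalar multiple of `e₁`. -/
lemma scalR {a : R} (ha : a ∈ T.A) : ∃ ν : k, a * T.e₁ = ν • T.e₁ := by
  obtain ⟨haM₁, haN⟩ := (T.mem_A_iff a).mp ha
  have hmem : a * T.e₁ ∈ T.M₁ := mul_mem haM₁ T.he₁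
  have hEmem : T.EM (a * T.e₁) ∈ T.M := T.hEM_mem _ hmem
  have hcomm : ∀ n ∈ T.N, T.EM (a * T.e₁) * n = n * T.EM (a * T.e₁) := by
    intro n hn
    have h1 : a * T.e₁ * n = n * (a * T.e₁) := by
      rw [mul_assoc, T.he₁N n hn, ← mul_assoc, ← haN n hn, mul_assoc]
    calc T.EM (a * T.e₁) * n = T.EM (a * T.e₁ * n) := (T.EM_rmul n (T.hNM hn) _ hmem).symm
      _ = T.EM (n * (a * T.e₁)) := by rw [h1]
      _ = n * T.EM (a * T.e₁) := T.EM_lmul n (T.hNM hn) _ hmem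
  obtain ⟨μ, hμ⟩ := T.hCMN _ hEmem hcomm
  refine ⟨T.lam⁻¹ * μ, ?_⟩
  rw [T.pullR a haM₁, hμ, smul_mul_assoc, one_mul, smul_smul]

/-- For `a ∈ A`, `e₁ a` is a scalar multiple of `e₁`. -/
lemma scalL {a : R} (ha : a ∈ T.A) : ∃ μ : k, T.e₁ * a = μ • T.e₁ := by
  obtain ⟨haM₁, haN⟩ := (T.mem_A_iff a).mp ha
  have hmem : T.e₁ * a ∈ T.M₁ := mul_mem T.he₁ haM₁
  have hEmem : T.EM (T.e₁ * a) ∈ T.M := T.hEM_mem _ hmem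
  have hcomm : ∀ n ∈ T.N, T.EM (T.e₁ * a) * n = n * T.EM (T.e₁ * a) := by
    intro n hn
    have h1 : T.e₁ * a * n = n * (T.e₁ * a) := by
      rw [mul_assoc, ← haN n hn, ← mul_assoc, T.he₁N n hn, mul_assoc]
    calc T.EM (T.e₁ * a) * n = T.EM (T.e₁ * a * n) := (T.EM_rmul n (T.hNM hn) _ hmem).symm
      _ = T.EM (n * (T.e₁ * a)) := by rw [h1]
      _ = n * T.EM (T.e₁ * a) := T.EM_lmul n (T.hNM hn) _ hmem
  obtain ⟨μ, hμ⟩ := T.hCMN _ hEmem hcomm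
  refine ⟨T.lam⁻¹ * μ, ?_⟩
  rw [T.pullL a haM₁, hμ, mul_smul_comm, mul_one, smul_smul]

lemma EM1_commN {x : R} (hx : ∀ n ∈ T.N, n * x = x * n) :
    ∀ n ∈ T.N, n * T.EM1 x = T.EM1 x * n := by
  intro n hn
  rw [← T.EM1_lmul n (T.memM₁_of_N hn) x, hx n hn, T.EM1_rmul n (T.memM₁_of_N hn) x]

lemma EM1_memA {x : R} (hx : ∀ n ∈ T.N, n * x = x * n) : T.EM1 x ∈ T.A :=
  (T.mem_A_iff _).mpr ⟨T.hEM1_mem x, T.EM1_commN hx⟩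

/-- Expansion of any element of `M₂` via the `zᵢ, wᵢ` over `e₂`. -/
lemma expand (x : R) :
    x = T.lam⁻¹ • ∑ i, T.zb i * T.e₂ * T.EM1 (T.e₂ * T.wb i * x) := by
  have hx : x ∈ Submodule.span k {y : R | ∃ w ∈ T.M₁, ∃ w' ∈ T.M₁, y = w * T.e₂ * w'} := by
    rw [← T.hspanM₂]; exact Submodule.mem_top
  induction hx using Submodule.span_induction with
  | mem y hy =>
    obtain ⟨w, hw, w', hw', rfl⟩ := hy
    have term : ∀ i, T.zb i * T.e₂ * T.EM1 (T.e₂ * T.wb i * (w * T.e₂ * w')) =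
        T.lam • (T.zb i * T.EM (T.wb i * w) * (T.e₂ * w')) := by
      intro i
      have hww : T.wb i * w ∈ T.M₁ := mul_mem (T.hwbM₁ i) hw
      have key : T.e₂ * T.wb i * (w * T.e₂ * w') = T.EM (T.wb i * w) * T.e₂ * w' := by
        have h0 : T.e₂ * T.wb i * (w * T.e₂ * w') = T.e₂ * (T.wb i * w) * T.e₂ * w' := by
          simp [mul_assoc]
        rw [h0, T.he₂we₂ _ hww]
      have hEmem : T.EM (T.wb i * w) ∈ T.M := T.hEM_mem _ hww
      rw [key, T.hEM1_bimod _ (T.hMM₁ hEmem) w' hw' T.e₂, T.hEM1e₂]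
      have hc : T.e₂ * T.EM (T.wb i * w) = T.EM (T.wb i * w) * T.e₂ := T.he₂M _ hEmem
      have h2 : T.zb i * T.e₂ * (T.EM (T.wb i * w) * w') =
          T.zb i * T.EM (T.wb i * w) * (T.e₂ * w') := by
        simp only [mul_assoc]
        rw [← mul_assoc T.e₂, hc, mul_assoc]
      rw [mul_smul_comm, smul_mul_assoc, mul_one, mul_smul_comm, h2]
    have hsum : (∑ i, T.zb i * T.e₂ * T.EM1 (T.e₂ * T.wb i * (w * T.e₂ * w'))) =
        T.lam • (w * T.e₂ * w') := by
      rw [Finset.sum_congr rfl fun i _ => term i, ← Finset.smul_sum, ← Finset.sum_mul,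
        T.hzw_dual₂ w hw, ← mul_assoc]
    rw [hsum, smul_smul, inv_mul_cancel₀ T.hlam, one_smul]
  | zero => simp
  | add a b ha hb iha ihb =>
    have hsplit : (∑ i, T.zb i * T.e₂ * T.EM1 (T.e₂ * T.wb i * (a + b))) =
        (∑ i, T.zb i * T.e₂ * T.EM1 (T.e₂ * T.wb i * a)) +
          (∑ i, T.zb i * T.e₂ * T.EM1 (T.e₂ * T.wb i * b)) := by
      rw [← Finset.sum_add_distrib]
      exact Finset.sum_congr rfl fun i _ => by rw [mul_add, map_add, mul_add]
    rw [hsplit, smul_add, ← iha, ← ihb]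
  | smul r a ha ih =>
    have hsplit : (∑ i, T.zb i * T.e₂ * T.EM1 (T.e₂ * T.wb i * (r • a))) =
        r • ∑ i, T.zb i * T.e₂ * T.EM1 (T.e₂ * T.wb i * a) := by
      rw [Finset.smul_sum]
      exact Finset.sum_congr rfl fun i _ => by rw [mul_smul_comm, map_smul, mul_smul_comm]
    rw [hsplit, smul_comm, ← ih]

end JonesTower

/-- **Depth 2 property.** `C = span{a e₂ a' : a, a' ∈ A} = span{b e₁ b' : b, b' ∈ B}`,
and `e₁ c e₁ = e₁ E_{M₁}(c)` for every `c ∈ C`. -/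
theorem depth_two_property (T : JonesTower k R) [Nontrivial R] :
    Subalgebra.toSubmodule T.C =
      Submodule.span k {x : R | ∃ a ∈ T.A, ∃ a' ∈ T.A, x = a * T.e₂ * a'} ∧
    Subalgebra.toSubmodule T.C =
      Submodule.span k {x : R | ∃ b ∈ T.B, ∃ b' ∈ T.B, x = b * T.e₁ * b'} ∧
    ∀ c ∈ T.C, T.e₁ * c * T.e₁ = T.e₁ * T.EM1 c := by
  classical
  -- Part 1 : C = span {a e₂ a' | a, a' ∈ A}
  have part1 : Subalgebra.toSubmodule T.C =
      Submodule.span k {x : R | ∃ a ∈ T.A, ∃ a' ∈ T.A, x = a * T.e₂ * a'} := by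
    apply le_antisymm
    · intro c hc
      have hcC : ∀ n ∈ T.N, n * c = c * n := (T.mem_C_iff c).mp hc
      have hzA : ∀ i, T.zb i ∈ T.A := fun i =>
        (T.mem_A_iff _).mpr ⟨T.hzbM₁ i, fun n hn => (T.hzbN i n hn).symm⟩
      have hyA : ∀ i, T.EM1 (T.e₂ * T.wb i * c) ∈ T.A := by
        intro i
        apply T.EM1_memA
        intro n hn
        have h1 : Commute n T.e₂ := (T.he₂M n (T.hNM hn)).symm
        have h2 : Commute n (T.wb i) := (T.hwbN i n hn).symm
        have h3 : Commute n c := hcC n hn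
        exact ((h1.mul_right h2).mul_right h3).eq
      rw [T.expand c]
      refine Submodule.smul_mem _ _ (Submodule.sum_mem _ fun i _ => ?_)
      exact Submodule.subset_span ⟨T.zb i, hzA i, T.EM1 (T.e₂ * T.wb i * c), hyA i, rfl⟩
    · rw [Submodule.span_le]
      rintro x ⟨a, ha, a', ha', rfl⟩
      have haN := ((T.mem_A_iff a).mp ha).2
      have haN' := ((T.mem_A_iff a').mp ha').2
      refine (T.mem_C_iff _).mpr fun n hn => ?_
      have h1 : Commute n a := haN n hn
      have h2 : Commute n T.e₂ := (T.he₂M n (T.hNM hn)).symm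
      have h3 : Commute n a' := haN' n hn
      exact ((h1.mul_right h2).mul_right h3).eq
  refine ⟨part1, ?_, ?_⟩
  · -- Part 2 : C = span {b e₁ b' | b, b' ∈ B}
    apply le_antisymm
    · rw [part1, Submodule.span_le]
      rintro x ⟨a, ha, a', ha', rfl⟩
      have haM₁ := ((T.mem_A_iff a).mp ha).1
      have haN := ((T.mem_A_iff a).mp ha).2
      have haM₁' := ((T.mem_A_iff a').mp ha').1
      have haN' := ((T.mem_A_iff a').mp ha').2
      have hyA : ∀ i, T.EM1 (T.vb i * (a * T.e₂)) ∈ T.A := by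
        intro i
        apply T.EM1_memA
        intro n hn
        have h1 : Commute n (T.vb i) := (T.hvbM i n (T.hNM hn)).symm
        have h2 : Commute n a := haN n hn
        have h3 : Commute n T.e₂ := (T.he₂M n (T.hNM hn)).symm
        exact (h1.mul_right (h2.mul_right h3)).eq
      have hy'A : ∀ j, T.EM1 (T.e₂ * a' * T.ub j) ∈ T.A := by
        intro j
        apply T.EM1_memA
        intro n hn
        have h1 : Commute n T.e₂ := (T.he₂M n (T.hNM hn)).symm
        have h2 : Commute n a' := haN' n hn
        have h3 : Commute n (T.ub j) := (T.hubM j n (T.hNM hn)).symm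
        exact ((h1.mul_right h2).mul_right h3).eq
      choose ν hν using fun i => T.scalR (hyA i)
      choose μ hμ using fun j => T.scalL (hy'A j)
      have hub : ∀ i, T.ub i ∈ T.B := fun i =>
        (T.mem_B_iff _).mpr fun m hm => (T.hubM i m hm).symm
      have hvb : ∀ j, T.vb j ∈ T.B := fun j =>
        (T.mem_B_iff _).mpr fun m hm => (T.hvbM j m hm).symm
      have key : a * T.e₂ * a' = T.lam⁻¹ • ((a * T.e₂) * T.e₁ * (T.e₂ * a')) := by
        have h0 : (a * T.e₂) * T.e₁ * (T.e₂ * a') = a * (T.e₂ * T.e₁ * T.e₂) * a' := by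
          simp [mul_assoc]
        rw [h0, T.hbraid₂, mul_smul_comm, smul_mul_assoc, smul_smul,
          inv_mul_cancel₀ T.hlam, one_smul]
      have h1 : a * T.e₂ = ∑ i, T.ub i * T.EM1 (T.vb i * (a * T.e₂)) :=
        (T.huv_dual₂ (a * T.e₂)).symm
      have h2 : T.e₂ * a' = ∑ j, T.EM1 (T.e₂ * a' * T.ub j) * T.vb j :=
        (T.huv_dual₁ (T.e₂ * a')).symm
      rw [key]
      nth_rewrite 1 [h1]
      rw [h2]
      rw [Finset.sum_mul, Finset.sum_mul]
      refine Submodule.smul_mem _ _ (Submodule.sum_mem _ fun i _ => ?_)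
      rw [Finset.mul_sum]
      refine Submodule.sum_mem _ fun j _ => ?_
      have hterm : T.ub i * T.EM1 (T.vb i * (a * T.e₂)) * T.e₁ *
          (T.EM1 (T.e₂ * a' * T.ub j) * T.vb j) =
          (ν i * μ j) • (T.ub i * T.e₁ * T.vb j) := by
        rw [mul_assoc (T.ub i), hν i, mul_smul_comm, smul_mul_assoc]
        have h3 : T.ub i * T.e₁ * (T.EM1 (T.e₂ * a' * T.ub j) * T.vb j) =
            T.ub i * (T.e₁ * T.EM1 (T.e₂ * a' * T.ub j)) * T.vb j := by
          simp [mul_assoc]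
        rw [h3, hμ j, mul_smul_comm, smul_mul_assoc, smul_smul]
      rw [hterm]
      exact Submodule.smul_mem _ _
        (Submodule.subset_span ⟨T.ub i, hub i, T.vb j, hvb j, rfl⟩)
    · rw [Submodule.span_le]
      rintro x ⟨b, hb, b', hb', rfl⟩
      refine (T.mem_C_iff _).mpr fun n hn => ?_
      have h1 : Commute n b := (T.mem_B_iff b).mp hb n (T.hNM hn)
      have h2 : Commute n T.e₁ := (T.he₁N n hn).symm
      have h3 : Commute n b' := (T.mem_B_iff b').mp hb' n (T.hNM hn)
      exact ((h1.mul_right h2).mul_right h3).eq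
  · -- Part 3 : e₁ c e₁ = e₁ EM1 c
    intro c hc
    have hc' : c ∈ Submodule.span k {x : R | ∃ a ∈ T.A, ∃ a' ∈ T.A, x = a * T.e₂ * a'} := by
      rw [← part1]; exact hc
    clear hc
    induction hc' using Submodule.span_induction with
    | mem x hx =>
      obtain ⟨a, ha, a', ha', rfl⟩ := hx
      have haM₁ := ((T.mem_A_iff a).mp ha).1
      have haM₁' := ((T.mem_A_iff a').mp ha').1
      obtain ⟨μ, hμ⟩ := T.scalL ha
      obtain ⟨ν, hν⟩ := T.scalR ha'
      obtain ⟨μ', hμ'⟩ := T.scalL ha'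
      have hνμ' : ν = μ' := by
        apply T.smul_e₁_cancel
        calc ν • T.e₁ = T.e₁ * (ν • T.e₁) := by rw [mul_smul_comm, T.e₁_idem]
          _ = T.e₁ * (a' * T.e₁) := by rw [← hν]
          _ = (T.e₁ * a') * T.e₁ := by rw [mul_assoc]
          _ = (μ' • T.e₁) * T.e₁ := by rw [hμ']
          _ = μ' • T.e₁ := by rw [smul_mul_assoc, T.e₁_idem]
      have hEM1 : T.EM1 (a * T.e₂ * a') = T.lam • (a * a') := by
        rw [T.hEM1_bimod a haM₁ a' haM₁' T.e₂, T.hEM1e₂, mul_smul_comm, mul_one,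
          smul_mul_assoc]
      have hL : T.e₁ * (a * T.e₂ * a') * T.e₁ = (μ * ν * T.lam) • T.e₁ := by
        have h0 : T.e₁ * (a * T.e₂ * a') * T.e₁ = (T.e₁ * a) * T.e₂ * (a' * T.e₁) := by
          simp [mul_assoc]
        rw [h0, hμ, hν, smul_mul_assoc, smul_mul_assoc, mul_smul_comm, smul_smul,
          T.hbraid₁, smul_smul]
      have hR : T.e₁ * T.EM1 (a * T.e₂ * a') = (T.lam * μ * μ') • T.e₁ := by
        rw [hEM1, mul_smul_comm]
        have h0 : T.e₁ * (a * a') = (T.e₁ * a) * a' := by rw [mul_assoc]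
        rw [h0, hμ, smul_mul_assoc, hμ', smul_smul, smul_smul]
      rw [hL, hR, hνμ']
      congr 1
      ring
    | zero => simp
    | add x y hx hy ihx ihy =>
      rw [mul_add, add_mul, map_add, mul_add, ihx, ihy]
    | smul r x hx ih =>
      rw [mul_smul_comm, smul_mul_assoc, map_smul, mul_smul_comm, ih]
end

section
/- In the depth-2 Jones tower setup, the linear functional F : C → k is faithful (non-degenerate): if c ∈ C satisfies F(cc') = 0 for all c' ∈ C, then c = 0; equivalently, if F(c'c) = 0 for all c' ∈ C, then c = 0. -/
open scoped TensorProduct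

variable {k : Type*} [Field k] {R : Type*} [Ring R] [Algebra k R]

lemma JonesTower.expand_right (T : JonesTower k R) (c : R)
    (hc : ∀ n ∈ T.N, c * n = n * c) :
    c = ∑ j, ∑ i, (T.F (c * (T.ub j * T.zb i))) • (T.wb i * T.vb j) := by
  have h2 : ∀ j i, T.EM1 (c * T.ub j) * T.zb i = T.EM1 (c * T.ub j * T.zb i) := by
    intro j i
    have := T.hEM1_bimod 1 (one_mem _) (T.zb i) (T.hzbM₁ i) (c * T.ub j)
    simpa using this.symm
  have hcomm : ∀ j i, ∀ n ∈ T.N, (c * T.ub j * T.zb i) * n = n * (c * T.ub j * T.zb i) := by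
    intro j i n hn
    calc c * T.ub j * T.zb i * n = c * T.ub j * (T.zb i * n) := by rw [mul_assoc]
      _ = c * T.ub j * (n * T.zb i) := by rw [T.hzbN i n hn]
      _ = c * (T.ub j * n) * T.zb i := by simp only [mul_assoc]
      _ = c * (n * T.ub j) * T.zb i := by rw [T.hubM j n (T.hNM hn)]
      _ = c * n * (T.ub j * T.zb i) := by rw [← mul_assoc, mul_assoc (c*n)]
      _ = n * c * (T.ub j * T.zb i) := by rw [hc n hn]
      _ = n * (c * T.ub j * T.zb i) := by rw [mul_assoc, ← mul_assoc c]
  have h3 : ∀ j i, T.EM (T.EM1 (c * T.ub j * T.zb i))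
      = algebraMap k R (T.F (c * T.ub j * T.zb i)) :=
    fun j i => (T.hF _ (hcomm j i)).symm
  calc c = ∑ j, T.EM1 (c * T.ub j) * T.vb j := (T.huv_dual₁ c).symm
    _ = ∑ j, (∑ i, T.EM (T.EM1 (c * T.ub j) * T.zb i) * T.wb i) * T.vb j := by
        refine Finset.sum_congr rfl fun j _ => ?_
        rw [T.hzw_dual₁ _ (T.hEM1_mem _)]
    _ = ∑ j, ∑ i, (T.F (c * (T.ub j * T.zb i))) • (T.wb i * T.vb j) := by
        refine Finset.sum_congr rfl fun j _ => ?_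
        rw [Finset.sum_mul]
        refine Finset.sum_congr rfl fun i _ => ?_
        rw [h2, h3, ← Algebra.smul_def, smul_mul_assoc, mul_assoc c]

lemma JonesTower.expand_left (T : JonesTower k R) (c : R)
    (hc : ∀ n ∈ T.N, c * n = n * c) :
    c = ∑ j, ∑ i, (T.F ((T.wb i * T.vb j) * c)) • (T.ub j * T.zb i) := by
  have h2 : ∀ j i, T.wb i * T.EM1 (T.vb j * c) = T.EM1 (T.wb i * T.vb j * c) := by
    intro j i
    have := T.hEM1_bimod (T.wb i) (T.hwbM₁ i) 1 (one_mem _) (T.vb j * c)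
    simpa [← mul_assoc] using this.symm
  have hcomm : ∀ j i, ∀ n ∈ T.N, (T.wb i * T.vb j * c) * n = n * (T.wb i * T.vb j * c) := by
    intro j i n hn
    calc T.wb i * T.vb j * c * n = T.wb i * T.vb j * (c * n) := by rw [mul_assoc]
      _ = T.wb i * T.vb j * (n * c) := by rw [hc n hn]
      _ = T.wb i * (T.vb j * n) * c := by simp only [mul_assoc]
      _ = T.wb i * (n * T.vb j) * c := by
          simp only [mul_assoc]
          rw [← mul_assoc (T.vb j), T.hvbM j n (T.hNM hn), mul_assoc]
      _ = T.wb i * n * (T.vb j * c) := by rw [← mul_assoc, mul_assoc (T.wb i * n)]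
      _ = n * T.wb i * (T.vb j * c) := by rw [T.hwbN i n hn]
      _ = n * (T.wb i * T.vb j * c) := by rw [mul_assoc, ← mul_assoc (T.wb i)]
  have h3 : ∀ j i, T.EM (T.EM1 (T.wb i * T.vb j * c))
      = algebraMap k R (T.F (T.wb i * T.vb j * c)) :=
    fun j i => (T.hF _ (hcomm j i)).symm
  calc c = ∑ j, T.ub j * T.EM1 (T.vb j * c) := (T.huv_dual₂ c).symm
    _ = ∑ j, T.ub j * (∑ i, T.zb i * T.EM (T.wb i * T.EM1 (T.vb j * c))) := by
        refine Finset.sum_congr rfl fun j _ => ?_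
        rw [T.hzw_dual₂ _ (T.hEM1_mem _)]
    _ = ∑ j, ∑ i, (T.F ((T.wb i * T.vb j) * c)) • (T.ub j * T.zb i) := by
        refine Finset.sum_congr rfl fun j _ => ?_
        rw [Finset.mul_sum]
        refine Finset.sum_congr rfl fun i _ => ?_
        rw [h2, h3, ← Algebra.commutes, ← Algebra.smul_def, mul_smul_comm]

/-- The functional `F = E_M ∘ E_{M₁}` is faithful (non-degenerate) on `C`:
if `F(cC) = 0` then `c = 0`, and if `F(Cc) = 0` then `c = 0`. -/
theorem F_is_faithful (T : JonesTower k R) [Nontrivial R] :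
    (∀ c ∈ T.C, (∀ c' ∈ T.C, T.F (c * c') = 0) → c = 0) ∧
    (∀ c ∈ T.C, (∀ c' ∈ T.C, T.F (c' * c) = 0) → c = 0) := by
  have memC : ∀ x : R, (∀ n ∈ T.N, x * n = n * x) → x ∈ T.C := by
    intro x hx
    rw [JonesTower.C, Subalgebra.mem_centralizer_iff]
    exact fun n hn => (hx n hn).symm
  have hCcomm : ∀ x : R, x ∈ T.C → ∀ n ∈ T.N, x * n = n * x := by
    intro x hx n hn
    rw [JonesTower.C, Subalgebra.mem_centralizer_iff] at hx
    exact (hx n hn).symm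
  have huz : ∀ j i, T.ub j * T.zb i ∈ T.C := by
    intro j i
    refine memC _ fun n hn => ?_
    calc T.ub j * T.zb i * n = T.ub j * (n * T.zb i) := by rw [mul_assoc, T.hzbN i n hn]
      _ = n * T.ub j * T.zb i := by rw [← mul_assoc, T.hubM j n (T.hNM hn), mul_assoc, ← mul_assoc]
      _ = n * (T.ub j * T.zb i) := by rw [mul_assoc]
  have hwv : ∀ i j, T.wb i * T.vb j ∈ T.C := by
    intro i j
    refine memC _ fun n hn => ?_
    calc T.wb i * T.vb j * n = T.wb i * (n * T.vb j) := by rw [mul_assoc, T.hvbM j n (T.hNM hn)]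
      _ = n * T.wb i * T.vb j := by rw [← mul_assoc, T.hwbN i n hn, mul_assoc, ← mul_assoc]
      _ = n * (T.wb i * T.vb j) := by rw [mul_assoc]
  constructor
  · intro c hcC h0
    rw [T.expand_right c (hCcomm c hcC)]
    refine Finset.sum_eq_zero fun j _ => Finset.sum_eq_zero fun i _ => ?_
    rw [h0 _ (huz j i), zero_smul]
  · intro c hcC h0
    rw [T.expand_left c (hCcomm c hcC)]
    refine Finset.sum_eq_zero fun j _ => Finset.sum_eq_zero fun i _ => ?_
    rw [h0 _ (hwv i j), zero_smul]
end

section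
/- In the depth-2 Jones tower setup, define E_B : C → B by E_B(c) := ∑ⱼ F(c uⱼ) vⱼ. Then E_B is a conditional expectation onto B: E_B(b) = b for all b ∈ B (in particular E_B(1) = 1), E_B(b c b') = b E_B(c) b' for all b, b' ∈ B and c ∈ C (B-bimodule map), E_B(b e₁ b') = λ b b' for all b, b' ∈ B, and E_B is faithful: if E_B(Cc) = 0 then c = 0. -/
open scoped TensorProduct

variable {k : Type*} [Field k] {R : Type*} [Ring R] [Algebra k R]

namespace JonesTower

variable {k : Type*} [Field k] {R : Type*} [Ring R] [Algebra k R]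

lemma comm_mul {x y z : R} (hx : x * z = z * x) (hy : y * z = z * y) :
    (x * y) * z = z * (x * y) := by
  rw [mul_assoc, hy, ← mul_assoc, hx, mul_assoc]

variable (T : JonesTower k R)

lemma em1_id {w : R} (hw : w ∈ T.M₁) : T.EM1 w = w := by
  have h := T.hEM1_bimod w hw 1 (one_mem _) 1
  simpa [T.hEM1_one] using h

lemma em1_left (x : R) {w : R} (hw : w ∈ T.M₁) : T.EM1 (w * x) = w * T.EM1 x := by
  have h := T.hEM1_bimod w hw 1 (one_mem _) x
  simpa using h

lemma em1_right (x : R) {w : R} (hw : w ∈ T.M₁) : T.EM1 (x * w) = T.EM1 x * w := by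
  have h := T.hEM1_bimod 1 (one_mem _) w hw x
  simpa using h

lemma em_left {x : R} (hx : x ∈ T.M₁) {m : R} (hm : m ∈ T.M) :
    T.EM (m * x) = m * T.EM x := by
  have h := T.hEM_bimod m hm 1 (one_mem _) x hx
  simpa using h

lemma em_right {x : R} (hx : x ∈ T.M₁) {m : R} (hm : m ∈ T.M) :
    T.EM (x * m) = T.EM x * m := by
  have h := T.hEM_bimod 1 (one_mem _) m hm x hx
  simpa using h

lemma em1_commM {b : R} (hb : ∀ m ∈ T.M, b * m = m * b) :
    ∀ m ∈ T.M, T.EM1 b * m = m * T.EM1 b := by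
  intro m hm
  rw [← T.em1_right b (T.hMM₁ hm), ← T.em1_left b (T.hMM₁ hm), hb m hm]

lemma em1_scalar {b : R} (hb : ∀ m ∈ T.M, b * m = m * b) :
    ∃ μ : k, T.EM1 b = μ • (1 : R) :=
  T.hCM₁M _ (T.hEM1_mem b) (T.em1_commM hb)

lemma em1_commN {c : R} (hc : ∀ n ∈ T.N, c * n = n * c) :
    ∀ n ∈ T.N, T.EM1 c * n = n * T.EM1 c := by
  intro n hn
  have hn' := T.hMM₁ (T.hNM hn)
  rw [← T.em1_right c hn', ← T.em1_left c hn', hc n hn]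

lemma em_commN {a : R} (ha₁ : a ∈ T.M₁) (ha : ∀ n ∈ T.N, a * n = n * a) :
    ∀ n ∈ T.N, T.EM a * n = n * T.EM a := by
  intro n hn
  have hnM := T.hNM hn
  rw [← T.em_right ha₁ hnM, ← T.em_left ha₁ hnM, ha n hn]

lemma em_scalar {a : R} (ha₁ : a ∈ T.M₁) (ha : ∀ n ∈ T.N, a * n = n * a) :
    ∃ ν : k, T.EM a = ν • (1 : R) :=
  T.hCMN _ (T.hEM_mem a ha₁) (T.em_commN ha₁ ha)

lemma x_e₂aux (x : R) : T.EM1 (x * T.e₂) * T.e₂ = T.lam • (x * T.e₂) := by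
  have hx : x ∈ Submodule.span k {x : R | ∃ w ∈ T.M₁, ∃ w' ∈ T.M₁, x = w * T.e₂ * w'} := by
    rw [← T.hspanM₂]; trivial
  induction hx using Submodule.span_induction with
  | mem y hy =>
      obtain ⟨w, hw, w', hw', rfl⟩ := hy
      have h1 : w * T.e₂ * w' * T.e₂ = (w * T.EM w') * T.e₂ := by
        rw [mul_assoc w, mul_assoc w, T.he₂we₂ w' hw', ← mul_assoc]
      have hww' : w * T.EM w' ∈ T.M₁ := mul_mem hw (T.hMM₁ (T.hEM_mem w' hw'))
      have h2 : T.EM1 (w * T.e₂ * w' * T.e₂) = T.lam • (w * T.EM w') := by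
        rw [h1, T.em1_left _ hww', T.hEM1e₂, mul_smul_comm, mul_one]
      rw [h2, h1, smul_mul_assoc]
  | zero => simp
  | add y z _ _ hy hz => rw [add_mul, map_add, add_mul, hy, hz, smul_add]
  | smul r y _ hy => rw [smul_mul_assoc, map_smul, smul_mul_assoc, hy, smul_comm]

lemma x_e₂ (x : R) : x * T.e₂ = T.lam⁻¹ • (T.EM1 (x * T.e₂) * T.e₂) := by
  rw [T.x_e₂aux x, smul_smul, inv_mul_cancel₀ T.hlam, one_smul]

lemma e₂_xaux (x : R) : T.e₂ * T.EM1 (T.e₂ * x) = T.lam • (T.e₂ * x) := by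
  have hx : x ∈ Submodule.span k {x : R | ∃ w ∈ T.M₁, ∃ w' ∈ T.M₁, x = w * T.e₂ * w'} := by
    rw [← T.hspanM₂]; trivial
  induction hx using Submodule.span_induction with
  | mem y hy =>
      obtain ⟨w, hw, w', hw', rfl⟩ := hy
      have h1 : T.e₂ * (w * T.e₂ * w') = T.e₂ * (T.EM w * w') := by
        rw [← mul_assoc, ← mul_assoc, T.he₂we₂ w hw, ← T.he₂M _ (T.hEM_mem w hw), mul_assoc]
      have hww' : T.EM w * w' ∈ T.M₁ := mul_mem (T.hMM₁ (T.hEM_mem w hw)) hw'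
      have h2 : T.EM1 (T.e₂ * (w * T.e₂ * w')) = T.lam • (T.EM w * w') := by
        rw [h1, T.em1_right _ hww', T.hEM1e₂, smul_mul_assoc, one_mul]
      rw [h2, h1, mul_smul_comm]
  | zero => simp
  | add y z _ _ hy hz => rw [mul_add, map_add, mul_add, hy, hz, smul_add]
  | smul r y _ hy => rw [mul_smul_comm, map_smul, mul_smul_comm, hy, smul_comm]

lemma e₂_x (x : R) : T.e₂ * x = T.lam⁻¹ • (T.e₂ * T.EM1 (T.e₂ * x)) := by
  rw [T.e₂_xaux x, smul_smul, inv_mul_cancel₀ T.hlam, one_smul]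

lemma sandwich {a : R} (ha₁ : a ∈ T.M₁) (haN : ∀ n ∈ T.N, a * n = n * a) :
    ∑ i, T.xb i * a * T.yb i = T.lam⁻¹ • T.EM a := by
  set d := ∑ i, T.xb i * a * T.yb i with hd
  have hdM₁ : d ∈ T.M₁ :=
    sum_mem fun i _ => mul_mem (mul_mem (T.hMM₁ (T.hxb i)) ha₁) (T.hMM₁ (T.hyb i))
  have hcomm : ∀ m ∈ T.M, d * m = m * d := by
    intro m hm
    have step : m * d = ∑ j, T.xb j * a * (T.yb j * m) := by
      calc m * d = ∑ i, (m * T.xb i) * (a * T.yb i) := by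
            rw [hd, Finset.mul_sum]
            exact Finset.sum_congr rfl fun i _ => by simp only [mul_assoc]
        _ = ∑ i, (∑ j, T.xb j * T.E (T.yb j * (m * T.xb i))) * (a * T.yb i) := by
            refine Finset.sum_congr rfl fun i _ => ?_
            rw [T.hE_dual₂ (m * T.xb i) (mul_mem hm (T.hxb i))]
        _ = ∑ j, ∑ i, T.xb j * (T.E (T.yb j * (m * T.xb i)) * (a * T.yb i)) := by
            rw [Finset.sum_comm]
            exact Finset.sum_congr rfl fun i _ => by
              rw [Finset.sum_mul]
              exact Finset.sum_congr rfl fun j _ => by simp only [mul_assoc]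
        _ = ∑ j, ∑ i, T.xb j * (a * (T.E (T.yb j * m * T.xb i) * T.yb i)) := by
            refine Finset.sum_congr rfl fun j _ => Finset.sum_congr rfl fun i _ => ?_
            have hEmem : T.E (T.yb j * (m * T.xb i)) ∈ T.N :=
              T.hE_mem _ (mul_mem (T.hyb j) (mul_mem hm (T.hxb i)))
            calc T.xb j * (T.E (T.yb j * (m * T.xb i)) * (a * T.yb i))
                = T.xb j * (T.E (T.yb j * (m * T.xb i)) * a * T.yb i) := by
                  simp only [mul_assoc]
              _ = T.xb j * (a * T.E (T.yb j * (m * T.xb i)) * T.yb i) := by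
                  rw [← haN _ hEmem]
              _ = T.xb j * (a * (T.E (T.yb j * m * T.xb i) * T.yb i)) := by
                  simp only [mul_assoc]
        _ = ∑ j, T.xb j * a * (T.yb j * m) := by
            refine Finset.sum_congr rfl fun j _ => ?_
            rw [← Finset.mul_sum, ← Finset.mul_sum,
              T.hE_dual₁ (T.yb j * m) (mul_mem (T.hyb j) hm), mul_assoc]
    rw [step, hd, Finset.sum_mul]
    exact Finset.sum_congr rfl fun j _ => by simp only [mul_assoc]
  obtain ⟨μ, hμ⟩ := T.hCM₁M d hdM₁ hcomm
  obtain ⟨ν, hν⟩ := T.em_scalar ha₁ haN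
  have hEMd : T.EM d = (ν * T.lam⁻¹) • 1 := by
    rw [hd, map_sum]
    calc ∑ i, T.EM (T.xb i * a * T.yb i) = ∑ i, T.xb i * T.EM a * T.yb i :=
          Finset.sum_congr rfl fun i _ => T.hEM_bimod _ (T.hxb i) _ (T.hyb i) a ha₁
      _ = ν • ∑ i, T.xb i * T.yb i := by
          rw [Finset.smul_sum]
          exact Finset.sum_congr rfl fun i _ => by
            rw [hν, mul_smul_comm, smul_mul_assoc, mul_one]
      _ = (ν * T.lam⁻¹) • 1 := by rw [T.hE_index, smul_smul]
  have hdE : d = T.EM d := by rw [hμ, map_smul, T.hEM_one]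
  rw [hdE, hEMd, hν, smul_smul, mul_comm]

lemma sum_xe₁y : ∑ i, T.xb i * T.e₁ * T.yb i = 1 := by
  rw [T.sandwich T.he₁ T.he₁N, T.hEMe₁, smul_smul, inv_mul_cancel₀ T.hlam, one_smul]

lemma key {b u : R} (hb : ∀ m ∈ T.M, b * m = m * b) (hu : ∀ m ∈ T.M, u * m = m * u) :
    T.EM (T.EM1 (b * T.e₁ * u)) = T.lam • T.EM1 (b * u) := by
  have hbN : ∀ n ∈ T.N, b * n = n * b := fun n hn => hb n (T.hNM hn)
  have huN : ∀ n ∈ T.N, u * n = n * u := fun n hn => hu n (T.hNM hn)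
  have he₂N : ∀ n ∈ T.N, T.e₂ * n = n * T.e₂ := fun n hn => T.he₂M n (T.hNM hn)
  set Θ := T.lam⁻¹ • T.EM1 (b * T.e₁ * T.e₂) with hΘ
  set Θ' := T.lam⁻¹ • T.EM1 (T.e₂ * (T.e₁ * u)) with hΘ'
  have hΘM₁ : Θ ∈ T.M₁ := Subalgebra.smul_mem _ (T.hEM1_mem _) _
  have hΘ'M₁ : Θ' ∈ T.M₁ := Subalgebra.smul_mem _ (T.hEM1_mem _) _
  have hΘN : ∀ n ∈ T.N, Θ * n = n * Θ := by
    intro n hn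
    have h := T.em1_commN (c := b * T.e₁ * T.e₂)
      (fun n hn => JonesTower.comm_mul (JonesTower.comm_mul (hbN n hn) (T.he₁N n hn)) (he₂N n hn)) n hn
    rw [hΘ, smul_mul_assoc, mul_smul_comm, h]
  have hΘ'N : ∀ n ∈ T.N, Θ' * n = n * Θ' := by
    intro n hn
    have h := T.em1_commN (c := T.e₂ * (T.e₁ * u))
      (fun n hn => JonesTower.comm_mul (he₂N n hn) (JonesTower.comm_mul (T.he₁N n hn) (huN n hn))) n hn
    rw [hΘ', smul_mul_assoc, mul_smul_comm, h]
  have hi : b * T.e₁ * T.e₂ = Θ * T.e₂ := by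
    rw [hΘ, smul_mul_assoc]; exact T.x_e₂ (b * T.e₁)
  have hii : T.lam • (b * T.e₁) = Θ * (T.e₂ * T.e₁) := by
    calc T.lam • (b * T.e₁) = b * (T.lam • T.e₁) := (mul_smul_comm _ _ _).symm
      _ = b * (T.e₁ * T.e₂ * T.e₁) := by rw [T.hbraid₁]
      _ = b * T.e₁ * T.e₂ * T.e₁ := by simp only [mul_assoc]
      _ = Θ * T.e₂ * T.e₁ := by rw [hi]
      _ = Θ * (T.e₂ * T.e₁) := mul_assoc _ _ _
  have hiii : T.e₂ * (T.e₁ * u) = T.e₂ * Θ' := by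
    rw [hΘ', mul_smul_comm]; exact T.e₂_x (T.e₁ * u)
  have hiv : T.lam • (b * T.e₁ * u) = Θ * T.e₂ * Θ' := by
    calc T.lam • (b * T.e₁ * u) = (T.lam • (b * T.e₁)) * u := by rw [smul_mul_assoc]
      _ = Θ * (T.e₂ * T.e₁) * u := by rw [hii]
      _ = Θ * (T.e₂ * (T.e₁ * u)) := by simp only [mul_assoc]
      _ = Θ * (T.e₂ * Θ') := by rw [hiii]
      _ = Θ * T.e₂ * Θ' := (mul_assoc _ _ _).symm
  have hv : T.EM1 (b * T.e₁ * u) = Θ * Θ' := by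
    have h5 : T.lam • T.EM1 (b * T.e₁ * u) = T.lam • (Θ * Θ') := by
      calc T.lam • T.EM1 (b * T.e₁ * u) = T.EM1 (T.lam • (b * T.e₁ * u)) := (map_smul _ _ _).symm
        _ = T.EM1 (Θ * T.e₂ * Θ') := by rw [hiv]
        _ = Θ * T.EM1 T.e₂ * Θ' := T.hEM1_bimod Θ hΘM₁ Θ' hΘ'M₁ T.e₂
        _ = T.lam • (Θ * Θ') := by
            rw [T.hEM1e₂]; simp only [mul_smul_comm, mul_one, smul_mul_assoc]
    have h6 := congrArg (fun x => T.lam⁻¹ • x) h5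
    simpa [smul_smul, inv_mul_cancel₀ T.hlam] using h6
  have hΘΘ'M₁ : Θ * Θ' ∈ T.M₁ := mul_mem hΘM₁ hΘ'M₁
  have hΘΘ'N : ∀ n ∈ T.N, (Θ * Θ') * n = n * (Θ * Θ') :=
    fun n hn => JonesTower.comm_mul (hΘN n hn) (hΘ'N n hn)
  have hvi : T.EM1 (b * u) = T.lam⁻¹ • T.EM (Θ * Θ') := by
    have hbu : b * u = ∑ i, T.xb i * (b * T.e₁ * u) * T.yb i := by
      calc b * u = b * 1 * u := by rw [mul_one]
        _ = b * (∑ i, T.xb i * T.e₁ * T.yb i) * u := by rw [T.sum_xe₁y]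
        _ = ∑ i, T.xb i * (b * T.e₁ * u) * T.yb i := by
            rw [Finset.mul_sum, Finset.sum_mul]
            refine Finset.sum_congr rfl fun i _ => ?_
            have h1 := hb (T.xb i) (T.hxb i)
            have h2 := hu (T.yb i) (T.hyb i)
            calc b * (T.xb i * T.e₁ * T.yb i) * u
                = (b * T.xb i) * (T.e₁ * (T.yb i * u)) := by simp only [mul_assoc]
              _ = (T.xb i * b) * (T.e₁ * (u * T.yb i)) := by rw [h1, ← h2]
              _ = T.xb i * (b * T.e₁ * u) * T.yb i := by simp only [mul_assoc]
    rw [hbu, map_sum, ← T.sandwich hΘΘ'M₁ hΘΘ'N]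
    exact Finset.sum_congr rfl fun i _ => by
      rw [T.hEM1_bimod _ (T.hMM₁ (T.hxb i)) _ (T.hMM₁ (T.hyb i)) _, hv]
  rw [hv, hvi, smul_smul, mul_inv_cancel₀ T.hlam, one_smul]

lemma coregen {b u : R} (hb : ∀ m ∈ T.M, b * m = m * b) (hu : ∀ m ∈ T.M, u * m = m * u)
    {μ : k} (hμ : T.EM1 (b * u) = μ • 1) {a : R} (ha : a ∈ T.M₁) :
    T.EM (T.EM1 (b * a * u)) = μ • T.EM a := by
  have ha' : a ∈ Submodule.span k {x : R | ∃ m ∈ T.M, ∃ m' ∈ T.M, x = m * T.e₁ * m'} := by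
    rw [← T.hspanM₁]; exact ha
  clear ha
  induction ha' using Submodule.span_induction with
  | mem y hy =>
      obtain ⟨m, hm, m', hm', rfl⟩ := hy
      have h1 : b * (m * T.e₁ * m') * u = m * (b * T.e₁ * u) * m' := by
        calc b * (m * T.e₁ * m') * u
            = (b * m) * (T.e₁ * (m' * u)) := by simp only [mul_assoc]
          _ = (m * b) * (T.e₁ * (u * m')) := by rw [hb m hm, ← hu m' hm']
          _ = m * (b * T.e₁ * u) * m' := by simp only [mul_assoc]
      rw [h1, T.hEM1_bimod m (T.hMM₁ hm) m' (T.hMM₁ hm') _,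
        T.hEM_bimod m hm m' hm' _ (T.hEM1_mem _), T.key hb hu, hμ,
        T.hEM_bimod m hm m' hm' _ T.he₁, T.hEMe₁]
      simp only [smul_smul, mul_smul_comm, smul_mul_assoc, mul_one]
      rw [mul_comm μ T.lam]
  | zero => simp
  | add y z _ _ hy hz => rw [mul_add, add_mul, map_add, map_add, hy, hz, map_add, smul_add]
  | smul r y _ hy =>
      rw [mul_smul_comm, smul_mul_assoc, map_smul, map_smul, hy, map_smul, smul_comm]

lemma master {a b u : R} (ha₁ : a ∈ T.M₁) (haN : ∀ n ∈ T.N, a * n = n * a)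
    (hb : ∀ m ∈ T.M, b * m = m * b) (hu : ∀ m ∈ T.M, u * m = m * u) :
    ∑ j, T.F (b * a * u * T.ub j) • T.vb j = T.EM a * (b * u) := by
  have step : ∀ j, T.F (b * a * u * T.ub j) • T.vb j
      = T.EM a * (T.EM1 (b * u * T.ub j) * T.vb j) := by
    intro j
    have huj : ∀ m ∈ T.M, (u * T.ub j) * m = m * (u * T.ub j) :=
      fun m hm => JonesTower.comm_mul (hu m hm) (T.hubM j m hm)
    obtain ⟨μ, hμ⟩ := T.em1_scalar (b := b * (u * T.ub j))
      (fun m hm => by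
        rw [mul_assoc, huj m hm, ← mul_assoc, hb m hm, mul_assoc])
    have hμ' : T.EM1 (b * (u * T.ub j)) = μ • 1 := hμ
    have hcg := T.coregen hb huj hμ' ha₁
    have hCN : ∀ n ∈ T.N, (b * a * (u * T.ub j)) * n = n * (b * a * (u * T.ub j)) :=
      fun n hn => JonesTower.comm_mul (JonesTower.comm_mul (hb n (T.hNM hn)) (haN n hn))
        (JonesTower.comm_mul (hu n (T.hNM hn)) (T.hubM j n (T.hNM hn)))
    have hF' := T.hF _ hCN
    calc T.F (b * a * u * T.ub j) • T.vb j
        = algebraMap k R (T.F (b * a * (u * T.ub j))) * T.vb j := by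
          rw [Algebra.smul_def, mul_assoc (b * a)]
      _ = (μ • T.EM a) * T.vb j := by rw [hF', hcg]
      _ = T.EM a * (T.EM1 (b * u * T.ub j) * T.vb j) := by
          rw [mul_assoc b u, hμ]
          simp only [smul_mul_assoc, one_mul, mul_smul_comm]
  calc ∑ j, T.F (b * a * u * T.ub j) • T.vb j
      = ∑ j, T.EM a * (T.EM1 (b * u * T.ub j) * T.vb j) := Finset.sum_congr rfl fun j _ => step j
    _ = T.EM a * ∑ j, T.EM1 (b * u * T.ub j) * T.vb j := (Finset.mul_sum _ _ _).symm
    _ = T.EM a * (b * u) := by rw [T.huv_dual₁ (b * u)]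

end JonesTower

/-- The map `E_B : C → B`, `E_B(c) = ∑ⱼ F(c uⱼ) vⱼ`, is a conditional expectation
onto `B`: it takes values in `B`, restricts to the identity on `B`, is a
`B`-bimodule map, satisfies `E_B(b e₁ b') = λ b b'`, and is faithful. -/
theorem conditional_expectation_onto_B (T : JonesTower k R) [Nontrivial R]
    (EB : R → R) (hEB : ∀ c : R, EB c = ∑ j, T.F (c * T.ub j) • T.vb j) :
    (∀ c ∈ T.C, EB c ∈ T.B) ∧
    (∀ b ∈ T.B, EB b = b) ∧
    (∀ b ∈ T.B, ∀ b' ∈ T.B, ∀ c ∈ T.C, EB (b * c * b') = b * EB c * b') ∧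
    (∀ b ∈ T.B, ∀ b' ∈ T.B, EB (b * T.e₁ * b') = T.lam • (b * b')) ∧
    (∀ c ∈ T.C, (∀ c' ∈ T.C, EB (c' * c) = 0) → c = 0) := by
  classical
  have hBcomm : ∀ b ∈ T.B, ∀ m ∈ T.M, b * m = m * b := fun b hb m hm =>
    ((Subalgebra.mem_centralizer_iff k).mp hb m hm).symm
  have hCcomm : ∀ c ∈ T.C, ∀ n ∈ T.N, c * n = n * c := fun c hc n hn =>
    ((Subalgebra.mem_centralizer_iff k).mp hc n hn).symm
  refine ⟨?_, ?_, ?_, ?_, ?_⟩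
  · intro c _
    rw [hEB]
    exact sum_mem fun j _ => Subalgebra.smul_mem _ ((Subalgebra.mem_centralizer_iff k).mpr
      fun m hm => (T.hvbM j m hm).symm) _
  · intro b hb
    have h := T.master (a := (1:R)) (b := (1:R)) (u := b) (one_mem _)
      (fun n _ => by rw [one_mul, mul_one]) (fun m _ => by rw [one_mul, mul_one])
      (hBcomm b hb)
    rw [hEB]
    simpa [T.hEM_one] using h
  · intro b hb b' hb' c hc
    have hc1 : b * c * b' = ∑ j, b * T.EM1 (c * T.ub j) * (T.vb j * b') := by
      conv_lhs => rw [← T.huv_dual₁ c]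
      rw [Finset.mul_sum, Finset.sum_mul]
      exact Finset.sum_congr rfl fun j _ => by simp only [mul_assoc]
    have hcubN : ∀ j : Fin T.s, ∀ n ∈ T.N, (c * T.ub j) * n = n * (c * T.ub j) :=
      fun j n hn => JonesTower.comm_mul (hCcomm c hc n hn) (T.hubM j n (T.hNM hn))
    calc EB (b * c * b') = ∑ i, T.F (b * c * b' * T.ub i) • T.vb i := hEB _
      _ = ∑ i, ∑ j, T.F (b * T.EM1 (c * T.ub j) * (T.vb j * b') * T.ub i) • T.vb i := by
          refine Finset.sum_congr rfl fun i _ => ?_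
          rw [hc1, Finset.sum_mul, map_sum, Finset.sum_smul]
      _ = ∑ j, ∑ i, T.F (b * T.EM1 (c * T.ub j) * (T.vb j * b') * T.ub i) • T.vb i :=
          Finset.sum_comm
      _ = ∑ j, T.EM (T.EM1 (c * T.ub j)) * (b * (T.vb j * b')) := by
          refine Finset.sum_congr rfl fun j _ => ?_
          exact T.master (T.hEM1_mem _) (T.em1_commN (hcubN j)) (hBcomm b hb)
            (fun m hm => JonesTower.comm_mul (T.hvbM j m hm) (hBcomm b' hb' m hm))
      _ = b * EB c * b' := by
          rw [hEB c, Finset.mul_sum, Finset.sum_mul]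
          refine Finset.sum_congr rfl fun j _ => ?_
          rw [← T.hF _ (hcubN j), ← Algebra.smul_def, mul_smul_comm, smul_mul_assoc,
            mul_assoc]
  · intro b hb b' hb'
    rw [hEB]
    have h := T.master T.he₁ T.he₁N (hBcomm b hb) (hBcomm b' hb')
    rw [h, T.hEMe₁, smul_mul_assoc, one_mul]
  · intro c hc H
    have hcN := hCcomm c hc
    have hwC : ∀ i, T.wb i ∈ T.C := fun i => (Subalgebra.mem_centralizer_iff k).mpr
      fun n hn => (T.hwbN i n hn).symm
    have hFz : ∀ (i : Fin T.r) (m : Fin T.s), T.F (T.wb i * c * T.ub m) • (1:R) = 0 := by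
      intro i m
      have h0 := H (T.wb i) (hwC i)
      rw [hEB] at h0
      have h1 := congrArg (fun x => T.EM1 (x * T.ub m)) h0
      simp only [Finset.sum_mul, map_sum, smul_mul_assoc, map_smul, zero_mul,
        map_zero] at h1
      have h2 : (∑ l, T.F (T.wb i * c * T.ub l) • T.EM1 (T.vb l * T.ub m))
          = T.F (T.wb i * c * T.ub m) • (1:R) := by
        rw [Finset.sum_eq_single m (fun l _ hlm => by rw [T.huv_orth l m, if_neg hlm, smul_zero])
          (fun hm => absurd (Finset.mem_univ m) hm), T.huv_orth m m, if_pos rfl]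
      rw [← h2]
      exact h1
    have haz : ∀ m : Fin T.s, T.EM1 (c * T.ub m) = 0 := by
      intro m
      rw [← T.hzw_dual₂ _ (T.hEM1_mem (c * T.ub m))]
      refine Finset.sum_eq_zero fun i _ => ?_
      have hcomm' : ∀ n ∈ T.N, (T.wb i * (c * T.ub m)) * n = n * (T.wb i * (c * T.ub m)) :=
        fun n hn => JonesTower.comm_mul (T.hwbN i n hn)
          (JonesTower.comm_mul (hcN n hn) (T.hubM m n (T.hNM hn)))
      have hEw : T.EM (T.wb i * T.EM1 (c * T.ub m)) = 0 := by
        rw [← T.em1_left (c * T.ub m) (T.hwbM₁ i), ← T.hF _ hcomm',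
          Algebra.algebraMap_eq_smul_one, ← mul_assoc]
        exact hFz i m
      rw [hEw, mul_zero]
    rw [← T.huv_dual₁ c]
    exact Finset.sum_eq_zero fun m _ => by rw [haz m, zero_mul]
end

section
/- In the depth-2 Jones tower setup, define ε : B → k by ε(b) := λ⁻¹ F(b e₂). Then: (a) λ⁻² F(e₂ e₁ b) = λ⁻¹ F(b e₂) for all b ∈ B (i.e., ε(b) = ⟨1, b⟩ for the pairing ⟨a,b⟩ = λ⁻²F(a e₂ e₁ b)); (b) ε(1) = 1; and (c) ε is multiplicative: ε(bb') = ε(b)ε(b') for all b, b' ∈ B. Thus ε is a k-algebra homomorphism B → k (the counit of B). -/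
open scoped TensorProduct

variable {k : Type*} [Field k] {R : Type*} [Ring R] [Algebra k R]

namespace JonesTowerAux

variable {k : Type*} [Field k] {R : Type*} [Ring R] [Algebra k R]

lemma key_swap (T : JonesTower k R) (x : R) :
    T.EM (T.EM1 (T.e₂ * x)) = T.EM (T.EM1 (x * T.e₂)) := by
  have hx : x ∈ (⊤ : Submodule k R) := trivial
  rw [T.hspanM₂] at hx
  induction hx using Submodule.span_induction with
  | mem y hy =>
      obtain ⟨w, hw, w', hw', rfl⟩ := hy
      have hwM₁ : w ∈ T.M₁ := hw
      have hw'M₁ : w' ∈ T.M₁ := hw'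
      have hEMw : T.EM w ∈ T.M := T.hEM_mem w hwM₁
      have hEMw' : T.EM w' ∈ T.M := T.hEM_mem w' hw'M₁
      have h1 : T.e₂ * (w * T.e₂ * w') = T.EM w * T.e₂ * w' := by
        rw [← mul_assoc, ← mul_assoc, T.he₂we₂ w hwM₁]
      have h2 : (w * T.e₂ * w') * T.e₂ = (w * T.EM w') * T.e₂ := by
        rw [mul_assoc w T.e₂ w', mul_assoc w (T.e₂ * w') T.e₂,
          T.he₂we₂ w' hw'M₁, ← mul_assoc]
      rw [h1, h2]
      have h3 : T.EM1 (T.EM w * T.e₂ * w') = T.EM w * T.EM1 T.e₂ * w' :=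
        T.hEM1_bimod (T.EM w) (T.hMM₁ hEMw) w' hw'M₁ T.e₂
      have h4 : T.EM1 ((w * T.EM w') * T.e₂) = (w * T.EM w') * T.EM1 T.e₂ := by
        have := T.hEM1_bimod (w * T.EM w') (mul_mem hwM₁ (T.hMM₁ hEMw')) 1
          (one_mem _) T.e₂
        simpa using this
      rw [h3, h4, T.hEM1e₂]
      have h5 : T.EM w * T.lam • (1:R) * w' = T.lam • (T.EM w * w') := by
        rw [mul_smul_comm, mul_one, smul_mul_assoc]
      have h6 : (w * T.EM w') * T.lam • (1:R) = T.lam • (w * T.EM w') := by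
        rw [mul_smul_comm, mul_one]
      rw [h5, h6, map_smul, map_smul]
      congr 1
      have e1 : T.EM (T.EM w * w') = T.EM w * T.EM w' := by
        have := T.hEM_bimod (T.EM w) hEMw 1 (one_mem _) w' hw'M₁
        simpa using this
      have e2 : T.EM (w * T.EM w') = T.EM w * T.EM w' := by
        have := T.hEM_bimod 1 (one_mem _) (T.EM w') hEMw' w hwM₁
        simpa using this
      rw [e1, e2]
  | zero => simp
  | add a b _ _ ha hb => rw [mul_add, add_mul, map_add, map_add, map_add, map_add, ha, hb]
  | smul c a _ ha =>
      rw [mul_smul_comm, smul_mul_assoc, map_smul, map_smul, map_smul, map_smul, ha]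

lemma pushdown (T : JonesTower k R) (x : R) :
    x * T.e₂ = T.lam⁻¹ • (T.EM1 (x * T.e₂) * T.e₂) := by
  have hx : x ∈ (⊤ : Submodule k R) := trivial
  rw [T.hspanM₂] at hx
  induction hx using Submodule.span_induction with
  | mem y hy =>
      obtain ⟨w, hw, w', hw', rfl⟩ := hy
      have hwM₁ : w ∈ T.M₁ := hw
      have hw'M₁ : w' ∈ T.M₁ := hw'
      have hEMw' : T.EM w' ∈ T.M := T.hEM_mem w' hw'M₁
      have h2 : (w * T.e₂ * w') * T.e₂ = (w * T.EM w') * T.e₂ := by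
        rw [mul_assoc w T.e₂ w', mul_assoc w (T.e₂ * w') T.e₂,
          T.he₂we₂ w' hw'M₁, ← mul_assoc]
      have h4 : T.EM1 ((w * T.EM w') * T.e₂) = T.lam • (w * T.EM w') := by
        have := T.hEM1_bimod (w * T.EM w') (mul_mem hwM₁ (T.hMM₁ hEMw')) 1
          (one_mem _) T.e₂
        simpa [T.hEM1e₂, mul_smul_comm] using this
      rw [h2, h4, smul_mul_assoc, smul_smul, inv_mul_cancel₀ T.hlam, one_smul]
  | zero => simp
  | add a b _ _ ha hb =>
      rw [add_mul, map_add, add_mul, smul_add]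
      exact congrArg₂ (· + ·) ha hb
  | smul c a _ ha =>
      rw [smul_mul_assoc, map_smul, smul_mul_assoc, smul_comm T.lam⁻¹ c]
      exact congrArg (c • ·) ha

lemma central_of_B (T : JonesTower k R) [Nontrivial R] {b : R} (hb : b ∈ T.B) :
    T.EM1 (b * T.e₂) = T.F (b * T.e₂) • (1 : R) := by
  have hbc : ∀ m ∈ T.M, m * b = b * m := fun m hm =>
    Set.mem_centralizer_iff.mp hb m hm
  have hNcen : ∀ n ∈ T.N, b * T.e₂ * n = n * (b * T.e₂) := by
    intro n hn
    have hnM : n ∈ T.M := T.hNM hn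
    rw [mul_assoc, T.he₂M n hnM, ← mul_assoc, ← hbc n hnM, mul_assoc]
  have hcomm : ∀ m ∈ T.M, T.EM1 (b * T.e₂) * m = m * T.EM1 (b * T.e₂) := by
    intro m hm
    have hmM₁ : m ∈ T.M₁ := T.hMM₁ hm
    have h1 : T.EM1 (m * (b * T.e₂) * 1) = m * T.EM1 (b * T.e₂) * 1 :=
      T.hEM1_bimod m hmM₁ 1 (one_mem _) (b * T.e₂)
    have h2 : T.EM1 (1 * (b * T.e₂) * m) = 1 * T.EM1 (b * T.e₂) * m :=
      T.hEM1_bimod 1 (one_mem _) m hmM₁ (b * T.e₂)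
    have h3 : m * (b * T.e₂) = (b * T.e₂) * m := by
      rw [← mul_assoc, hbc m hm, mul_assoc, ← T.he₂M m hm, ← mul_assoc]
    simp only [one_mul, mul_one] at h1 h2
    rw [← h2, ← h3, h1]
  obtain ⟨μ, hμ⟩ := T.hCM₁M (T.EM1 (b * T.e₂)) (T.hEM1_mem _) hcomm
  have hFeq : algebraMap k R (T.F (b * T.e₂)) = T.EM (T.EM1 (b * T.e₂)) :=
    T.hF (b * T.e₂) hNcen
  rw [hμ, map_smul, T.hEM_one] at hFeq
  have : T.F (b * T.e₂) = μ := by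
    apply (algebraMap k R).injective
    rw [hFeq, Algebra.algebraMap_eq_smul_one]
  rw [hμ, this]

end JonesTowerAux

/-- Properties of the counit `ε(b) := λ⁻¹ F(b e₂)` of `B`:
(a) `ε(b) = ⟨1, b⟩ = λ⁻² F(e₂ e₁ b)`; (b) `ε(1) = 1`; (c) `ε` is multiplicative.
Hence `ε` is a `k`-algebra homomorphism `B → k`. -/
theorem counit_of_B (T : JonesTower k R) [Nontrivial R] :
    (∀ b ∈ T.B, T.lam⁻¹ ^ 2 * T.F (T.e₂ * T.e₁ * b) = T.lam⁻¹ * T.F (b * T.e₂)) ∧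
    T.lam⁻¹ * T.F ((1 : R) * T.e₂) = 1 ∧
    (∀ b ∈ T.B, ∀ b' ∈ T.B,
      T.lam⁻¹ * T.F (b * b' * T.e₂) =
        (T.lam⁻¹ * T.F (b * T.e₂)) * (T.lam⁻¹ * T.F (b' * T.e₂))) := by
  constructor
  · intro b hb
    have hbc : ∀ m ∈ T.M, m * b = b * m := fun m hm =>
      Set.mem_centralizer_iff.mp hb m hm
    have hNcen : ∀ n ∈ T.N, T.e₂ * T.e₁ * b * n = n * (T.e₂ * T.e₁ * b) := by
      intro n hn
      have hnM : n ∈ T.M := T.hNM hn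
      rw [mul_assoc, ← hbc n hnM, ← mul_assoc, mul_assoc T.e₂ T.e₁ n,
        T.he₁N n hn, ← mul_assoc T.e₂ n T.e₁, T.he₂M n hnM,
        mul_assoc n T.e₂ T.e₁, mul_assoc n (T.e₂ * T.e₁) b]
    have key : algebraMap k R (T.F (T.e₂ * T.e₁ * b))
        = algebraMap k R (T.lam * T.F (b * T.e₂)) := by
      rw [T.hF _ hNcen]
      rw [mul_assoc, JonesTowerAux.key_swap T (T.e₁ * b), mul_assoc]
      have h1 : T.EM1 (T.e₁ * (b * T.e₂) * 1) = T.e₁ * T.EM1 (b * T.e₂) * 1 :=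
        T.hEM1_bimod T.e₁ T.he₁ 1 (one_mem _) (b * T.e₂)
      simp only [mul_one] at h1
      rw [h1, JonesTowerAux.central_of_B T hb, mul_smul_comm, mul_one, map_smul,
        T.hEMe₁, smul_smul, Algebra.algebraMap_eq_smul_one, mul_comm]
    have hF : T.F (T.e₂ * T.e₁ * b) = T.lam * T.F (b * T.e₂) :=
      (algebraMap k R).injective key
    have hx : T.lam⁻¹ ^ 2 * T.lam = T.lam⁻¹ := by
      rw [pow_two, mul_assoc, inv_mul_cancel₀ T.hlam, mul_one]
    rw [hF, ← mul_assoc, hx]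
  constructor
  · have hNcen : ∀ n ∈ T.N, T.e₂ * n = n * T.e₂ := fun n hn =>
      T.he₂M n (T.hNM hn)
    have key : algebraMap k R (T.F T.e₂) = algebraMap k R T.lam := by
      rw [T.hF _ hNcen, T.hEM1e₂, map_smul, T.hEM_one,
        Algebra.algebraMap_eq_smul_one]
    have hF : T.F T.e₂ = T.lam := (algebraMap k R).injective key
    rw [one_mul, hF, inv_mul_cancel₀ T.hlam]
  · intro b hb b' hb'
    have hbb' : b * b' ∈ T.B := mul_mem hb hb'
    have h1 : T.EM1 (b * b' * T.e₂) = T.F (b * b' * T.e₂) • (1 : R) :=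
      JonesTowerAux.central_of_B T hbb'
    have hp := JonesTowerAux.pushdown T b'
    rw [JonesTowerAux.central_of_B T hb', smul_mul_assoc, one_mul, smul_smul] at hp
    have h2 : b * b' * T.e₂ = (T.lam⁻¹ * T.F (b' * T.e₂)) • (b * T.e₂) := by
      conv_lhs => rw [mul_assoc, hp, mul_smul_comm]
    have h3 : T.EM1 (b * b' * T.e₂)
        = (T.lam⁻¹ * T.F (b' * T.e₂) * T.F (b * T.e₂)) • (1 : R) := by
      rw [h2, map_smul, JonesTowerAux.central_of_B T hb, smul_smul]
    rw [h1] at h3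
    have h4 : T.F (b * b' * T.e₂) = T.lam⁻¹ * T.F (b' * T.e₂) * T.F (b * T.e₂) := by
      apply (algebraMap k R).injective
      rw [Algebra.algebraMap_eq_smul_one, Algebra.algebraMap_eq_smul_one, h3]
    rw [h4]
    ring
end
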